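/- arXiv:1906.05477 — 7 statements merged into one kernel-verified Lean document; each statement's English description precedes it below -/
import Mathlib

section
/- Let G be a topological group that has small subgroups, i.e., every neighborhood of the identity of G contains a subgroup different from the trivial subgroup {1}. Then for every complex Hilbert space H there is no injective group homomorphism from G into the group of unitary operators on H that is continuous with respect to the operator-norm topology on the unitary group. -/
universe u v

lemma aux_sq {A : Type*} [NormedRing A] [NormedAlgebra ℝ A] (a : A) (h : ‖a - 1‖ < 1/2) :
    (3/2 : ℝ) * ‖a - 1‖ ≤ ‖a ^ 2 - 1‖ := by
  have key : a ^ 2 - 1 - (a - 1) * (a - 1) = (2 : ℝ) • (a - 1) := by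
    rw [two_smul]; noncomm_ring
  have h1 : ‖(2 : ℝ) • (a - 1)‖ ≤ ‖a ^ 2 - 1‖ + ‖(a - 1) * (a - 1)‖ := by
    rw [← key]; exact norm_sub_le _ _
  have h2 : ‖(a - 1) * (a - 1)‖ ≤ ‖a - 1‖ * ‖a - 1‖ := norm_mul_le _ _
  have h3 : ‖(2 : ℝ) • (a - 1)‖ = 2 * ‖a - 1‖ := by
    rw [norm_smul]; norm_num
  nlinarith [norm_nonneg (a - 1)]

/-- If a topological group has small subgroups (every neighborhood of the identity contains a
nontrivial subgroup), then there is no injective norm-continuous homomorphism of `G` into the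
unitary group of a complex Hilbert space. -/
theorem stmt4 {G : Type v} [Group G] [TopologicalSpace G] [IsTopologicalGroup G]
    (hsmall : ∀ U ∈ nhds (1 : G), ∃ K : Subgroup G, K ≠ ⊥ ∧ (K : Set G) ⊆ U)
    (H : Type u) [NormedAddCommGroup H] [InnerProductSpace ℂ H] [CompleteSpace H] :
    ¬ ∃ π : G →* unitary (H →L[ℂ] H), Function.Injective π ∧ Continuous π := by
  rintro ⟨π, hinj, hcont⟩
  set V : Set (unitary (H →L[ℂ] H)) := {u | ‖(u : H →L[ℂ] H) - 1‖ < 1/2} with hV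
  have hVopen : IsOpen V := by
    have hc : Continuous fun u : unitary (H →L[ℂ] H) => ‖(u : H →L[ℂ] H) - 1‖ :=
      (continuous_subtype_val.sub continuous_const).norm
    exact isOpen_lt hc continuous_const
  have hVmem : V ∈ nhds (1 : unitary (H →L[ℂ] H)) := by
    refine hVopen.mem_nhds ?_
    show ‖((1 : unitary (H →L[ℂ] H)) : H →L[ℂ] H) - 1‖ < 1/2
    rw [OneMemClass.coe_one, sub_self, norm_zero]
    norm_num
  have hU : π ⁻¹' V ∈ nhds (1 : G) := by
    have := hcont.continuousAt (x := (1 : G))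
    rw [ContinuousAt, map_one] at this
    exact this hVmem
  obtain ⟨K, hKne, hKsub⟩ := hsmall _ hU
  rw [Subgroup.ne_bot_iff_exists_ne_one] at hKne
  obtain ⟨⟨g, hgK⟩, hg1⟩ := hKne
  have hg : g ≠ 1 := by simpa [Subtype.ext_iff] using hg1
  set a : H →L[ℂ] H := (π g : H →L[ℂ] H) with ha
  have hsmol : ∀ n : ℕ, ‖a ^ (2 ^ n) - 1‖ < 1/2 := by
    intro n
    have hmem : g ^ (2 ^ n) ∈ K := pow_mem hgK _
    have := hKsub hmem
    simpa [hV, ha, map_pow] using this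
  have ht0 : 0 < ‖a - 1‖ := by
    rw [norm_pos_iff, sub_ne_zero]
    intro hco
    apply hg
    apply hinj
    rw [map_one]
    exact Subtype.ext hco
  have hgrow : ∀ n : ℕ, (3/2 : ℝ) ^ n * ‖a - 1‖ ≤ ‖a ^ (2 ^ n) - 1‖ := by
    intro n
    induction n with
    | zero => simp
    | succ n ih =>
      have h1 := aux_sq (a ^ (2 ^ n)) (hsmol n)
      have h2 : (a ^ (2 ^ n)) ^ 2 = a ^ (2 ^ (n + 1)) := by
        rw [← pow_mul, pow_succ]
      rw [h2] at h1
      calc (3/2 : ℝ) ^ (n + 1) * ‖a - 1‖ = (3/2) * ((3/2) ^ n * ‖a - 1‖) := by ring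
        _ ≤ (3/2) * ‖a ^ (2 ^ n) - 1‖ := by nlinarith
        _ ≤ ‖a ^ (2 ^ (n + 1)) - 1‖ := h1
  obtain ⟨n, hn⟩ := pow_unbounded_of_one_lt (1 / (2 * ‖a - 1‖)) (by norm_num : (1:ℝ) < 3/2)
  have := (hgrow n).trans_lt (hsmol n)
  rw [div_lt_iff₀ (by positivity)] at hn
  nlinarith
end

section
/- The additive topological group C([0,1], ℝ) of continuous real-valued functions on the unit interval, equipped with the supremum norm, is norm unitarily representable. -/
open Topology

universe u

noncomputable section

/-- A topological group is norm unitarily representable if it admits an injective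
group homomorphism onto a closed subgroup of the unitary group of some complex Hilbert
space with the operator-norm topology, which is a homeomorphism onto its image. -/
def IsNUR (G : Type u) [Group G] [TopologicalSpace G] : Prop :=
  ∃ (K : Type u) (_ : NormedAddCommGroup K) (_ : InnerProductSpace ℂ K) (_ : CompleteSpace K)
    (π : G →* unitary (K →L[ℂ] K)),
      Function.Injective π ∧ Topology.IsClosedEmbedding π

section Stmt6Aux
open Real

lemma norm_exp_sub_one_eq (t : ℝ) :
    ‖Complex.exp (t * Complex.I) - 1‖ = 2 * |Real.sin (t/2)| := by
  have h1 : Complex.exp (t*Complex.I) - 1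
      = ((Real.cos t - 1 : ℝ) : ℂ) + ((Real.sin t : ℝ) : ℂ) * Complex.I := by
    rw [Complex.exp_mul_I]
    push_cast
    ring
  rw [h1, Complex.norm_add_mul_I, Real.abs_sin_half]
  rw [show (Real.cos t - 1)^2 + (Real.sin t)^2 = 2^2 * ((1 - Real.cos t)/2) by
    nlinarith [Real.sin_sq_add_cos_sq t]]
  rw [Real.sqrt_mul (by positivity), Real.sqrt_sq (by norm_num : (0:ℝ) ≤ 2)]

lemma norm_exp_sub_one_le (t : ℝ) : ‖Complex.exp (t * Complex.I) - 1‖ ≤ |t| := by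
  rw [norm_exp_sub_one_eq]
  rcases eq_or_ne (t/2) 0 with h | h
  · simp [h, show t = 0 by linarith [h]]
  · have h1 := (Real.abs_sin_lt_abs h).le
    have h2 : |t/2| = |t|/2 := by rw [abs_div]; norm_num
    rw [h2] at h1; linarith

lemma abs_sin_abs (s : ℝ) : |Real.sin (|s|)| = |Real.sin s| := by
  rcases abs_choice s with h | h <;> rw [h] <;> simp [Real.sin_neg]

lemma exists_scale (t : ℝ) : ∃ n : ℕ,
    2/Real.pi * min |t| (Real.pi/2) ≤ ‖Complex.exp (((t / 2^n : ℝ) : ℂ) * Complex.I) - 1‖ := by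
  have hπ := Real.pi_pos
  have key : ∀ n : ℕ, ‖Complex.exp (((t / 2^n : ℝ) : ℂ) * Complex.I) - 1‖
      = 2 * |Real.sin (|t| / 2^(n+1))| := by
    intro n
    rw [norm_exp_sub_one_eq, ← abs_sin_abs]
    congr 2
    rw [abs_div, abs_div, abs_pow]
    norm_num
    rw [pow_succ]
    ring
  rcases le_or_gt |t| Real.pi with hle | hgt
  · refine ⟨0, ?_⟩
    rw [key 0]
    have he : |t|/2^(0+1) = |t|/2 := by norm_num
    rw [he]
    have h2 : abs (|t|/2) ≤ Real.pi / 2 := by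
      rw [abs_of_nonneg (by positivity)]; linarith
    have h3 := Real.mul_abs_le_abs_sin h2
    rw [abs_of_nonneg (by positivity : (0:ℝ) ≤ |t|/2)] at h3
    have hmin : min |t| (Real.pi/2) ≤ |t| := min_le_left _ _
    have h2π : (0:ℝ) < 2/Real.pi := by positivity
    nlinarith
  · have hex : ∃ n : ℕ, |t| ≤ Real.pi * 2^n := by
      obtain ⟨n, hn⟩ := pow_unbounded_of_one_lt (|t| / Real.pi) (by norm_num : (1:ℝ) < 2)
      exact ⟨n, by rw [div_lt_iff₀ hπ] at hn; nlinarith⟩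
    classical
    let N := Nat.find hex
    have hN : |t| ≤ Real.pi * 2^N := Nat.find_spec hex
    have hN0 : N ≠ 0 := by
      intro h
      rw [h] at hN; simp at hN; linarith
    obtain ⟨m, hm⟩ := Nat.exists_eq_succ_of_ne_zero hN0
    have hlt : Real.pi * 2^m < |t| := by
      have := Nat.find_min hex (m := m) (by omega)
      linarith [not_le.mp this]
    refine ⟨N, ?_⟩
    rw [key N]
    set s := |t| / 2^(N+1) with hs
    have hs1 : s ≤ Real.pi / 2 := by
      rw [hs, div_le_div_iff₀ (by positivity) (by norm_num : (0:ℝ) < 2)]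
      calc |t| * 2 ≤ (Real.pi * 2^N) * 2 := by linarith
      _ = 2^(N+1) * Real.pi := by ring
      _ = Real.pi * 2^(N+1) := by ring
    have hs0 : Real.pi/4 < s := by
      rw [hs, lt_div_iff₀ (by positivity), hm]
      have h4 : (2:ℝ)^(m+1+1) = 4 * 2^m := by ring
      rw [h4]
      nlinarith
    have habs : abs s ≤ Real.pi/2 := by rw [abs_of_nonneg (by positivity)]; exact hs1
    have h3 := Real.mul_abs_le_abs_sin habs
    rw [abs_of_nonneg (le_of_lt (lt_trans (by positivity) hs0))] at h3
    have hmin : min |t| (Real.pi/2) ≤ Real.pi/2 := min_le_right _ _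
    have h1 : 2/Real.pi * min |t| (Real.pi/2) ≤ 1 := by
      calc 2/Real.pi * min |t| (Real.pi/2) ≤ 2/Real.pi * (Real.pi/2) :=
            mul_le_mul_of_nonneg_left hmin (by positivity)
      _ = 1 := by field_simp
    have h2 : (1:ℝ) ≤ 2 * |Real.sin s| := by
      have hgt2 : 2/Real.pi * (Real.pi/4) < 2/Real.pi * s :=
        mul_lt_mul_of_pos_left hs0 (by positivity)
      have he : 2/Real.pi * (Real.pi/4) = 1/2 := by field_simp; ring
      nlinarith
    linarith

open scoped ENNReal NNReal


abbrev IotaX : Type := unitInterval × ℕ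
abbrev KH : Type := lp (fun _ : IotaX => ℂ) 2

lemma two_toReal : ((2:ℝ≥0∞)).toReal = 2 := by norm_num
lemma two_pos' : (0:ℝ) < ((2:ℝ≥0∞)).toReal := by norm_num

lemma memℓp_mul {c : IotaX → ℂ} (hc : ∀ i, ‖c i‖ ≤ 1) (x : KH) :
    Memℓp (fun i => c i * x i) 2 := by
  apply memℓp_gen
  refine Summable.of_nonneg_of_le (fun i => ?_) (fun i => ?_)
    ((lp.memℓp x).summable two_pos')
  · positivity
  · rw [norm_mul]
    apply Real.rpow_le_rpow (by positivity) ?_ (by norm_num)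
    calc ‖c i‖ * ‖x i‖ ≤ 1 * ‖x i‖ := by
          exact mul_le_mul_of_nonneg_right (hc i) (norm_nonneg _)
    _ = ‖x i‖ := one_mul _

-- pointwise-bounded comparison for lp norms
lemma lp_norm_le {x y : KH} {M : ℝ} (hM : 0 ≤ M) (h : ∀ i, ‖y i‖ ≤ M * ‖x i‖) :
    ‖y‖ ≤ M * ‖x‖ := by
  apply lp.norm_le_of_tsum_le two_pos' (by positivity)
  have hsum : Summable fun i => M ^ ((2:ℝ≥0∞)).toReal * ‖x i‖ ^ ((2:ℝ≥0∞)).toReal :=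
    ((lp.memℓp x).summable two_pos').mul_left _
  calc ∑' i, ‖y i‖ ^ ((2:ℝ≥0∞)).toReal
      ≤ ∑' i, M ^ ((2:ℝ≥0∞)).toReal * ‖x i‖ ^ ((2:ℝ≥0∞)).toReal := by
        apply Summable.tsum_le_tsum ?_ ?_ hsum
        · intro i
          rw [← Real.mul_rpow hM (norm_nonneg _)]
          exact Real.rpow_le_rpow (norm_nonneg _) (h i) (by norm_num)
        · refine Summable.of_nonneg_of_le (fun i => by positivity) (fun i => ?_) hsum
          rw [← Real.mul_rpow hM (norm_nonneg _)]
          exact Real.rpow_le_rpow (norm_nonneg _) (h i) (by norm_num)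
    _ = M ^ ((2:ℝ≥0∞)).toReal * ∑' i, ‖x i‖ ^ ((2:ℝ≥0∞)).toReal := tsum_mul_left
    _ = (M * ‖x‖) ^ ((2:ℝ≥0∞)).toReal := by
        rw [← lp.norm_rpow_eq_tsum two_pos', Real.mul_rpow hM (norm_nonneg _)]

noncomputable def diagEquiv (c : IotaX → ℂ) (hc : ∀ i, ‖c i‖ = 1) : KH ≃ₗᵢ[ℂ] KH where
  toFun x := ⟨fun i => c i * x i, memℓp_mul (fun i => (hc i).le) x⟩
  invFun x := ⟨fun i => (starRingEnd ℂ) (c i) * x i,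
    memℓp_mul (fun i => by rw [RCLike.norm_conj]; exact (hc i).le) x⟩
  map_add' x y := by
    apply lp.ext
    funext i
    simp only [lp.coeFn_add, Pi.add_apply]
    exact mul_add _ _ _
  map_smul' a x := by
    apply lp.ext
    funext i
    simp only [lp.coeFn_smul, Pi.smul_apply, RingHom.id_apply, smul_eq_mul]
    ring
  left_inv x := by
    apply lp.ext
    funext i
    have h1 : (starRingEnd ℂ) (c i) * c i = 1 := by
      rw [Complex.conj_mul']
      norm_cast
      rw [hc i]; norm_num
    show (starRingEnd ℂ) (c i) * (c i * x i) = x i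
    rw [← mul_assoc, h1, one_mul]
  right_inv x := by
    apply lp.ext
    funext i
    have h1 : c i * (starRingEnd ℂ) (c i) = 1 := by
      rw [Complex.mul_conj]
      norm_cast
      rw [← Complex.sq_norm, hc i]; norm_num
    show c i * ((starRingEnd ℂ) (c i) * x i) = x i
    rw [← mul_assoc, h1, one_mul]
  norm_map' x := by
    rw [lp.norm_eq_tsum_rpow two_pos', lp.norm_eq_tsum_rpow two_pos']
    congr 1
    apply tsum_congr
    intro i
    show ‖c i * x i‖ ^ _ = _
    rw [norm_mul, hc i, one_mul]

@[simp] lemma diagEquiv_apply (c : IotaX → ℂ) (hc) (x : KH) (i : IotaX) :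
    (diagEquiv c hc x) i = c i * x i := rfl


noncomputable def coefF (f : C(unitInterval, ℝ)) : IotaX → ℂ :=
  fun p => Complex.exp (((f p.1 / 2 ^ p.2 : ℝ) : ℂ) * Complex.I)

lemma norm_coefF (f : C(unitInterval, ℝ)) (p : IotaX) : ‖coefF f p‖ = 1 :=
  Complex.norm_exp_ofReal_mul_I _

lemma coefF_add (f g : C(unitInterval, ℝ)) (p : IotaX) :
    coefF (f + g) p = coefF f p * coefF g p := by
  unfold coefF
  rw [← Complex.exp_add]
  congr 1
  push_cast [ContinuousMap.add_apply]
  ring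

noncomputable def diagF (f : C(unitInterval, ℝ)) : KH ≃ₗᵢ[ℂ] KH :=
  diagEquiv (coefF f) (norm_coefF f)

noncomputable def pihom : Multiplicative C(unitInterval, ℝ) →* unitary (KH →L[ℂ] KH) :=
  MonoidHom.mk'
    (fun f => (Unitary.linearIsometryEquiv (𝕜 := ℂ) (H := KH)).symm
        (diagF (Multiplicative.toAdd f)))
    (by
      intro f g
      have hmul : diagF (Multiplicative.toAdd (f * g))
          = diagF (Multiplicative.toAdd f) * diagF (Multiplicative.toAdd g) := by
        apply LinearIsometryEquiv.ext
        intro x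
        apply lp.ext
        funext i
        show coefF (Multiplicative.toAdd (f * g)) i * x i
            = coefF (Multiplicative.toAdd f) i * (coefF (Multiplicative.toAdd g) i * x i)
        rw [toAdd_mul, coefF_add]
        ring
      show Unitary.linearIsometryEquiv.symm _
          = Unitary.linearIsometryEquiv.symm _ * Unitary.linearIsometryEquiv.symm _
      rw [hmul, MulEquiv.map_mul])

lemma pihom_coe_apply (f : Multiplicative C(unitInterval, ℝ)) (x : KH) (i : IotaX) :
    (((pihom f : unitary (KH →L[ℂ] KH)) : KH →L[ℂ] KH) x) i
      = coefF (Multiplicative.toAdd f) i * x i := by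
  have h2 : Unitary.linearIsometryEquiv (𝕜 := ℂ) (H := KH) (pihom f)
      = diagF (Multiplicative.toAdd f) := by
    show Unitary.linearIsometryEquiv (Unitary.linearIsometryEquiv.symm _) = _
    rw [MulEquiv.apply_symm_apply]
  have h := Unitary.coe_linearIsometryEquiv_apply (𝕜 := ℂ) (H := KH) (pihom f)
  rw [h2] at h
  have h3 : ((pihom f : unitary (KH →L[ℂ] KH)) : KH →L[ℂ] KH) x
      = diagF (Multiplicative.toAdd f) x := by
    rw [← h]; rfl
  rw [h3]
  exact diagEquiv_apply _ _ x i

lemma coefF_sub_norm (f g : C(unitInterval, ℝ)) (p : IotaX) :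
    ‖coefF f p - coefF g p‖
      = ‖Complex.exp ((((f - g) p.1 / 2 ^ p.2 : ℝ) : ℂ) * Complex.I) - 1‖ := by
  have h : coefF f p - coefF g p
      = coefF g p * (Complex.exp ((((f - g) p.1 / 2 ^ p.2 : ℝ) : ℂ) * Complex.I) - 1) := by
    rw [mul_sub, mul_one]
    unfold coefF
    rw [← Complex.exp_add]
    congr 2
    push_cast [ContinuousMap.sub_apply]
    ring
  rw [h, norm_mul, norm_coefF, one_mul]

lemma coefF_sub_le (f g : C(unitInterval, ℝ)) (p : IotaX) :
    ‖coefF f p - coefF g p‖ ≤ ‖f - g‖ := by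
  rw [coefF_sub_norm]
  refine (norm_exp_sub_one_le _).trans ?_
  have h1 : (1:ℝ) ≤ 2 ^ p.2 := one_le_pow₀ (by norm_num)
  calc |(f - g) p.1 / 2 ^ p.2| = |(f - g) p.1| / 2 ^ p.2 := by
        rw [abs_div, abs_pow]; norm_num
  _ ≤ |(f - g) p.1| := div_le_self (abs_nonneg _) h1
  _ ≤ ‖f - g‖ := by
        rw [← Real.norm_eq_abs]
        exact ContinuousMap.norm_coe_le_norm (f - g) p.1

lemma dist_pihom_le (f g : Multiplicative C(unitInterval, ℝ)) :
    dist (pihom f) (pihom g) ≤ dist f g := by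
  set f' := Multiplicative.toAdd f with hf'
  set g' := Multiplicative.toAdd g with hg'
  have hdist : dist f g = ‖f' - g'‖ := dist_eq_norm f' g'
  rw [Subtype.dist_eq, dist_eq_norm, hdist]
  apply ContinuousLinearMap.opNorm_le_bound _ (norm_nonneg _)
  intro x
  apply lp_norm_le (norm_nonneg _)
  intro i
  have happ : ((((pihom f : unitary (KH →L[ℂ] KH)) : KH →L[ℂ] KH)
      - ((pihom g : unitary (KH →L[ℂ] KH)) : KH →L[ℂ] KH)) x) i
      = (coefF f' i - coefF g' i) * x i := by
    rw [ContinuousLinearMap.sub_apply, lp.coeFn_sub, Pi.sub_apply,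
      pihom_coe_apply, pihom_coe_apply, sub_mul]
  rw [happ, norm_mul]
  exact mul_le_mul_of_nonneg_right (coefF_sub_le f' g' i) (norm_nonneg _)

lemma le_dist_pihom (f g : Multiplicative C(unitInterval, ℝ)) {δ : ℝ} (hδ : 0 < δ)
    (h : δ ≤ dist f g) :
    2/Real.pi * min (δ/2) (Real.pi/2) ≤ dist (pihom f) (pihom g) := by
  have hπ := Real.pi_pos
  set f' := Multiplicative.toAdd f with hf'
  set g' := Multiplicative.toAdd g with hg'
  have hdist : dist f g = ‖f' - g'‖ := dist_eq_norm f' g'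
  rw [hdist] at h
  -- find a point where |(f' - g') x| > ‖f' - g'‖ / 2
  have hx : ∃ x : unitInterval, ‖f' - g'‖ / 2 < |(f' - g') x| := by
    by_contra hc
    push_neg at hc
    have := (ContinuousMap.norm_le (f := f' - g') (C := ‖f' - g'‖/2) (by positivity)).mpr
      (fun x => by rw [Real.norm_eq_abs]; exact hc x)
    linarith
  obtain ⟨x, hx⟩ := hx
  set t := (f' - g') x with ht
  obtain ⟨n, hn⟩ := exists_scale t
  -- the key coefficient bound
  have hcoef : 2/Real.pi * min (δ/2) (Real.pi/2) ≤ ‖coefF f' (x, n) - coefF g' (x, n)‖ := by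
    rw [coefF_sub_norm]
    refine le_trans ?_ hn
    apply mul_le_mul_of_nonneg_left ?_ (by positivity)
    apply min_le_min ?_ (le_refl _)
    calc δ/2 ≤ ‖f' - g'‖ / 2 := by linarith
    _ ≤ |t| := hx.le
  -- single vector estimate
  set A := ((pihom f : unitary (KH →L[ℂ] KH)) : KH →L[ℂ] KH) with hA
  set B := ((pihom g : unitary (KH →L[ℂ] KH)) : KH →L[ℂ] KH) with hB
  set e : KH := lp.single 2 (x, n) (1 : ℂ) with he
  have hnorme : ‖e‖ = 1 := by
    rw [he]
    have := lp.norm_single (E := fun _ : IotaX => ℂ) (p := 2) (by norm_num) (x, n) (1:ℂ)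
    simpa using this
  have happ : ((A - B) e) (x, n) = coefF f' (x, n) - coefF g' (x, n) := by
    rw [ContinuousLinearMap.sub_apply, lp.coeFn_sub, Pi.sub_apply,
      hA, hB, pihom_coe_apply, pihom_coe_apply]
    rw [he]
    rw [lp.single_apply_self]
    ring
  have h1 : ‖coefF f' (x, n) - coefF g' (x, n)‖ ≤ ‖(A - B) e‖ := by
    rw [← happ]
    exact lp.norm_apply_le_norm (by norm_num) ((A - B) e) (x, n)
  have h2 : ‖(A - B) e‖ ≤ ‖A - B‖ := by
    calc ‖(A - B) e‖ ≤ ‖A - B‖ * ‖e‖ := (A - B).le_opNorm e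
    _ = ‖A - B‖ := by rw [hnorme, mul_one]
  rw [Subtype.dist_eq, dist_eq_norm]
  exact hcoef.trans (h1.trans h2)

set_option synthInstance.maxHeartbeats 1000000 in
private theorem stmt6' : ∃ (K : Type) (_ : NormedAddCommGroup K) (_ : InnerProductSpace ℂ K)
    (_ : CompleteSpace K) (pp : Multiplicative C(unitInterval, ℝ) →* unitary (K →L[ℂ] K)),
      Function.Injective pp ∧ Topology.IsClosedEmbedding pp := by
  have hπ := Real.pi_pos
  refine ⟨KH, inferInstance, inferInstance, inferInstance, pihom, ?_, ?_⟩
  · intro f g hfg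
    by_contra hne
    have hd : 0 < dist f g := dist_pos.mpr hne
    have h1 := le_dist_pihom f g hd (le_refl _)
    rw [hfg, dist_self] at h1
    have h2 : 0 < 2/Real.pi * min (dist f g / 2) (Real.pi/2) := by
      apply mul_pos (by positivity)
      exact lt_min (by linarith) (by linarith)
    linarith
  · haveI : CompleteSpace (Multiplicative C(unitInterval, ℝ)) :=
      inferInstanceAs (CompleteSpace C(unitInterval, ℝ))
    haveI : T0Space (unitary (KH →L[ℂ] KH)) :=
      inferInstanceAs (T0Space (Subtype _))
    apply IsUniformEmbedding.isClosedEmbedding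
    rw [Metric.isUniformEmbedding_iff']
    constructor
    · intro ε hε
      exact ⟨ε, hε, fun {a b} hab => lt_of_le_of_lt (dist_pihom_le a b) hab⟩
    · intro δ hδ
      refine ⟨2/Real.pi * min (δ/2) (Real.pi/2), ?_, ?_⟩
      · apply mul_pos (by positivity)
        exact lt_min (by linarith) (by linarith)
      · intro a b hab
        by_contra hge
        push_neg at hge
        exact absurd (le_dist_pihom a b hδ hge) (not_le.mpr hab)

end Stmt6Aux

/-- The additive group `C([0,1], ℝ)` of continuous real-valued functions on the unit interval,
with the supremum norm, is norm unitarily representable. -/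
theorem stmt6 : IsNUR (Multiplicative C(unitInterval, ℝ)) := stmt6'
end
end

section
/- Every separable real Banach space, regarded as an additive topological group with the norm topology, is norm unitarily representable. -/
open Topology
open scoped ENNReal

universe u

noncomputable section

namespace NURAux

lemma norm_expI_sub_one (r : ℝ) :
    ‖Complex.exp (r * Complex.I) - 1‖ = 2 * |Real.sin (r / 2)| := by
  have h : Complex.exp (r * Complex.I) - 1
      = ((Real.cos r - 1 : ℝ) : ℂ) + ((Real.sin r : ℝ) : ℂ) * Complex.I := by
    rw [Complex.exp_mul_I, ← Complex.ofReal_cos, ← Complex.ofReal_sin]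
    push_cast
    ring
  rw [h, Complex.norm_add_mul_I]
  have hs : Real.sin (r / 2) ^ 2 = 1 / 2 - Real.cos r / 2 := by
    have h2 : 2 * (r / 2) = r := by ring
    rw [Real.sin_sq_eq_half_sub, h2]
  have hc := Real.sin_sq_add_cos_sq r
  have h2 : (Real.cos r - 1) ^ 2 + Real.sin r ^ 2 = (2 * |Real.sin (r / 2)|) ^ 2 := by
    rw [mul_pow, sq_abs]
    nlinarith
  rw [h2, Real.sqrt_sq (by positivity)]

lemma norm_expI_sub_expI (a b : ℝ) :
    ‖Complex.exp (a * Complex.I) - Complex.exp (b * Complex.I)‖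
      = 2 * |Real.sin ((a - b) / 2)| := by
  have key : ((b : ℂ)) * Complex.I + ((a - b : ℝ) : ℂ) * Complex.I = (a : ℂ) * Complex.I := by
    push_cast; ring
  have h : Complex.exp (a * Complex.I) - Complex.exp (b * Complex.I)
      = Complex.exp (b * Complex.I) * (Complex.exp (((a - b : ℝ) : ℂ) * Complex.I) - 1) := by
    rw [mul_sub, mul_one, ← Complex.exp_add, key]
  rw [h, norm_mul, Complex.norm_exp_ofReal_mul_I, one_mul,
    norm_expI_sub_one]

lemma two_abs_sin_half_le (r : ℝ) : 2 * |Real.sin (r / 2)| ≤ |r| := by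
  have h1 : |Real.sin (r / 2)| ≤ |r / 2| := Real.abs_sin_le_abs
  have h2 : |r / 2| = |r| / 2 := by rw [abs_div]; norm_num
  linarith


section Diag

variable {I : Type*}

local notation "K" => lp (fun _ : I => ℂ) 2

lemma memℓp_diag {u : I → ℂ} (hu : ∀ i, ‖u i‖ ≤ 1) (f : K) :
    Memℓp (fun i => u i * f i) 2 := by
  apply memℓp_gen
  have hp : 0 < (2 : ℝ≥0∞).toReal := by norm_num
  have hf : Summable (fun i => ‖f i‖ ^ (2 : ℝ≥0∞).toReal) := (lp.memℓp f).summable hp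
  refine Summable.of_nonneg_of_le (fun i => ?_) (fun i => ?_) hf
  · positivity
  · apply Real.rpow_le_rpow (norm_nonneg _) ?_ ENNReal.toReal_nonneg
    calc ‖u i * f i‖ = ‖u i‖ * ‖f i‖ := norm_mul _ _
      _ ≤ 1 * ‖f i‖ := by gcongr; exact hu i
      _ = ‖f i‖ := one_mul _

lemma lp_norm_le_mul {C : ℝ} (hC : 0 ≤ C) (g f : K)
    (h : ∀ i, ‖g i‖ ≤ C * ‖f i‖) : ‖g‖ ≤ C * ‖f‖ := by
  have hp : 0 < (2 : ℝ≥0∞).toReal := by norm_num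
  refine lp.norm_le_of_tsum_le hp (by positivity) ?_
  have hsg : Summable (fun i => ‖g i‖ ^ (2 : ℝ≥0∞).toReal) := (lp.memℓp g).summable hp
  have hsf : Summable (fun i => ‖f i‖ ^ (2 : ℝ≥0∞).toReal) := (lp.memℓp f).summable hp
  have h1 : ∀ i, ‖g i‖ ^ (2 : ℝ≥0∞).toReal
      ≤ C ^ (2 : ℝ≥0∞).toReal * ‖f i‖ ^ (2 : ℝ≥0∞).toReal := by
    intro i
    rw [← Real.mul_rpow hC (norm_nonneg _)]
    exact Real.rpow_le_rpow (norm_nonneg _) (h i) ENNReal.toReal_nonneg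
  calc ∑' i, ‖g i‖ ^ (2 : ℝ≥0∞).toReal
      ≤ ∑' i, C ^ (2 : ℝ≥0∞).toReal * ‖f i‖ ^ (2 : ℝ≥0∞).toReal :=
        hsg.tsum_le_tsum h1 (hsf.mul_left _)
    _ = C ^ (2 : ℝ≥0∞).toReal * ∑' i, ‖f i‖ ^ (2 : ℝ≥0∞).toReal := tsum_mul_left
    _ = C ^ (2 : ℝ≥0∞).toReal * ‖f‖ ^ (2 : ℝ≥0∞).toReal := by
        rw [lp.norm_rpow_eq_tsum hp]
    _ = (C * ‖f‖) ^ (2 : ℝ≥0∞).toReal := (Real.mul_rpow hC (norm_nonneg _)).symm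

/-- The diagonal operator on `ℓ²(I, ℂ)` with entries `u`. -/
def diag (u : I → ℂ) (hu : ∀ i, ‖u i‖ ≤ 1) : K →L[ℂ] K :=
  LinearMap.mkContinuous
    { toFun := fun f => (⟨fun i => u i * f i, memℓp_diag hu f⟩ : K)
      map_add' := fun f g => by
        apply lp.ext
        funext i
        simp only [lp.coeFn_add, Pi.add_apply]
        change u i * (f + g) i = u i * f i + u i * g i
        rw [lp.coeFn_add]
        simp [mul_add]
      map_smul' := fun c f => by
        apply lp.ext
        funext i
        change u i * (c • f) i = c • (u i * f i)
        rw [lp.coeFn_smul]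
        simp only [Pi.smul_apply, smul_eq_mul]
        ring }
    1 (fun f => by
      have h := lp_norm_le_mul (zero_le_one) (⟨fun i => u i * f i, memℓp_diag hu f⟩ : K) f
        (fun i => by
          change ‖u i * f i‖ ≤ 1 * ‖f i‖
          rw [norm_mul]
          gcongr
          exact hu i)
      simpa using h)

lemma diag_apply (u : I → ℂ) (hu : ∀ i, ‖u i‖ ≤ 1) (f : K) (i : I) :
    (diag u hu f : ∀ _ : I, ℂ) i = u i * f i := rfl

lemma diag_congr {u v : I → ℂ} (hu : ∀ i, ‖u i‖ ≤ 1) (hv : ∀ i, ‖v i‖ ≤ 1)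
    (h : ∀ i, u i = v i) : diag u hu = diag v hv := by
  ext f i
  rw [diag_apply, diag_apply, h i]

lemma diag_mul {u v : I → ℂ} (hu : ∀ i, ‖u i‖ ≤ 1) (hv : ∀ i, ‖v i‖ ≤ 1)
    (huv : ∀ i, ‖u i * v i‖ ≤ 1) :
    diag u hu * diag v hv = diag (fun i => u i * v i) huv := by
  ext f i
  rw [ContinuousLinearMap.mul_apply, diag_apply, diag_apply, diag_apply, mul_assoc]

lemma diag_one (h1 : ∀ i, ‖(1 : ℂ)‖ ≤ 1) :
    diag (fun _ : I => (1 : ℂ)) h1 = 1 := by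
  ext f i
  rw [diag_apply, ContinuousLinearMap.one_apply, one_mul]

lemma diag_star {u : I → ℂ} (hu : ∀ i, ‖u i‖ ≤ 1)
    (hu' : ∀ i, ‖(starRingEnd ℂ) (u i)‖ ≤ 1) :
    star (diag u hu) = diag (fun i => (starRingEnd ℂ) (u i)) hu' := by
  rw [ContinuousLinearMap.star_eq_adjoint]
  refine ((ContinuousLinearMap.eq_adjoint_iff _ _).mpr ?_).symm
  intro x y
  rw [lp.inner_eq_tsum, lp.inner_eq_tsum]
  apply tsum_congr
  intro i
  rw [diag_apply, diag_apply, RCLike.inner_apply, RCLike.inner_apply, map_mul,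
    Complex.conj_conj]
  ring

lemma diag_mem_unitary (u : I → ℂ) (hu : ∀ i, ‖u i‖ = 1) :
    diag u (fun i => (hu i).le) ∈ unitary (K →L[ℂ] K) := by
  have hconj : ∀ i, ‖(starRingEnd ℂ) (u i)‖ ≤ 1 := fun i => by
    rw [RCLike.norm_conj]; exact (hu i).le
  have hmul : ∀ i, (starRingEnd ℂ) (u i) * u i = 1 := by
    intro i
    rw [Complex.conj_mul', hu i]
    norm_num
  have hmul' : ∀ i, u i * (starRingEnd ℂ) (u i) = 1 := fun i => by
    rw [mul_comm]; exact hmul i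
  have h1 : ∀ _ : I, ‖(1:ℂ)‖ ≤ 1 := fun _ => by norm_num
  rw [Unitary.mem_iff]
  constructor
  · rw [diag_star _ hconj,
      diag_mul hconj (fun i => (hu i).le) (fun i => by rw [hmul i]; norm_num),
      diag_congr _ h1 (fun i => hmul i), diag_one]
  · rw [diag_star _ hconj,
      diag_mul (fun i => (hu i).le) hconj (fun i => by rw [hmul' i]; norm_num),
      diag_congr _ h1 (fun i => hmul' i), diag_one]

lemma diag_sub_norm_le {u v : I → ℂ} (hu : ∀ i, ‖u i‖ ≤ 1) (hv : ∀ i, ‖v i‖ ≤ 1)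
    {C : ℝ} (hC : 0 ≤ C) (h : ∀ i, ‖u i - v i‖ ≤ C) :
    ‖diag u hu - diag v hv‖ ≤ C := by
  refine ContinuousLinearMap.opNorm_le_bound _ hC (fun f => ?_)
  refine lp_norm_le_mul hC _ f (fun i => ?_)
  have he : ((diag u hu - diag v hv) f : ∀ _ : I, ℂ) i = (u i - v i) * f i := by
    rw [ContinuousLinearMap.sub_apply, lp.coeFn_sub, Pi.sub_apply, diag_apply, diag_apply,
      sub_mul]
  rw [he, norm_mul]
  exact mul_le_mul_of_nonneg_right (h i) (norm_nonneg _)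

lemma le_diag_sub_norm [DecidableEq I] {u v : I → ℂ} (hu : ∀ i, ‖u i‖ ≤ 1)
    (hv : ∀ i, ‖v i‖ ≤ 1) (i : I) :
    ‖u i - v i‖ ≤ ‖diag u hu - diag v hv‖ := by
  set s : K := lp.single 2 i (1 : ℂ) with hs_def
  have hs : ‖s‖ = 1 := by
    have h := lp.norm_single (p := 2) (E := fun _ : I => ℂ) (by norm_num) i (1 : ℂ)
    rw [hs_def, h, norm_one]
  have he : ((diag u hu - diag v hv) s : ∀ _ : I, ℂ) i = u i - v i := by
    rw [ContinuousLinearMap.sub_apply, lp.coeFn_sub, Pi.sub_apply, diag_apply, diag_apply]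
    rw [hs_def]
    rw [lp.single_apply_self]
    ring
  calc ‖u i - v i‖ = ‖((diag u hu - diag v hv) s : ∀ _ : I, ℂ) i‖ := by rw [he]
    _ ≤ ‖(diag u hu - diag v hv) s‖ := lp.norm_apply_le_norm (by norm_num) _ i
    _ ≤ ‖diag u hu - diag v hv‖ * ‖s‖ := ContinuousLinearMap.le_opNorm _ _
    _ = ‖diag u hu - diag v hv‖ := by rw [hs, mul_one]

end Diag

lemma exists_norming (E : Type*) [NormedAddCommGroup E] [NormedSpace ℝ E]
    [TopologicalSpace.SeparableSpace E] :
    ∃ g : ℕ → E →L[ℝ] ℝ, (∀ n, ‖g n‖ ≤ 1) ∧ ∀ z : E, z ≠ 0 → ∃ n, ‖z‖ / 2 < |g n z| := by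
  have : Nonempty E := ⟨0⟩
  obtain ⟨u, hu⟩ := TopologicalSpace.exists_dense_seq E
  choose g hg1 hg2 using fun n => exists_dual_vector'' ℝ (u n)
  refine ⟨g, hg1, fun z hz => ?_⟩
  have hz4 : (0 : ℝ) < ‖z‖ / 4 := by
    have : 0 < ‖z‖ := norm_pos_iff.mpr hz
    linarith
  obtain ⟨n, hn⟩ := hu.exists_dist_lt z hz4
  rw [dist_eq_norm] at hn
  refine ⟨n, ?_⟩
  have h1 : ‖z‖ - ‖u n‖ ≤ ‖z - u n‖ := norm_sub_norm_le z (u n)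
  have h3 : |g n (u n) - g n z| ≤ ‖z - u n‖ := by
    rw [← map_sub]
    calc |g n (u n - z)| ≤ ‖g n‖ * ‖u n - z‖ := (g n).le_opNorm _
      _ ≤ 1 * ‖u n - z‖ := mul_le_mul_of_nonneg_right (hg1 n) (norm_nonneg _)
      _ = ‖z - u n‖ := by rw [one_mul, norm_sub_rev]
  have h4 : |g n (u n)| - |g n z| ≤ |g n (u n) - g n z| := abs_sub_abs_le_abs_sub _ _
  have h5 : |g n (u n)| = ‖u n‖ := by
    rw [hg2 n]
    exact abs_of_nonneg (norm_nonneg (u n))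
  linarith

lemma exists_m (a : ℝ) (ha : 0 ≤ a) :
    ∃ m : ℕ, 2 / Real.pi * min 1 a ≤ 2 * |Real.sin (a / (2 * ((m : ℝ) + 1)))| := by
  have hπ : (0 : ℝ) < Real.pi := Real.pi_pos
  have hπ3 : (3 : ℝ) < Real.pi := Real.pi_gt_three
  by_cases hle : a ≤ Real.pi
  · refine ⟨0, ?_⟩
    have h0 : (0 : ℝ) ≤ a / 2 := by linarith
    have h1 : a / 2 ≤ Real.pi / 2 := by linarith
    have h2 := Real.mul_le_sin h0 h1
    have hsin : 0 ≤ Real.sin (a / 2) := Real.sin_nonneg_of_nonneg_of_le_pi h0 (by linarith)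
    have he : a / (2 * ((0 : ℕ) + 1) : ℝ) = a / 2 := by norm_num
    rw [he, abs_of_nonneg hsin]
    have hmin : min 1 a ≤ a := min_le_right _ _
    have hpos : (0 : ℝ) ≤ 2 / Real.pi := by positivity
    nlinarith
  · push_neg at hle
    have ha2 : (2 : ℝ) ≤ a := by linarith
    have hhalf : (1 : ℝ) ≤ a / 2 := by linarith
    set k := ⌈a / 2⌉₊ with hk
    have hk1 : 1 ≤ k := Nat.one_le_ceil_iff.mpr (by linarith)
    refine ⟨k - 1, ?_⟩
    have hkk : ((k - 1 : ℕ) : ℝ) + 1 = (k : ℝ) := by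
      rw [Nat.cast_sub hk1]
      push_cast
      ring
    have hle1 : a / 2 ≤ (k : ℝ) := Nat.le_ceil _
    have hle2 : (k : ℝ) < a / 2 + 1 := Nat.ceil_lt_add_one (by linarith)
    have hk_le_a : (k : ℝ) ≤ a := by linarith
    have hkpos : (0 : ℝ) < (k : ℝ) := by
      have := hk1
      exact_mod_cast Nat.pos_of_ne_zero (by omega)
    set t := a / (2 * (k : ℝ)) with ht
    have ht1 : 1 / 2 ≤ t := by
      rw [ht, le_div_iff₀ (by positivity)]
      linarith
    have ht2 : t ≤ 1 := by
      rw [ht, div_le_one (by positivity)]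
      linarith
    have htπ : t ≤ Real.pi / 2 := by linarith
    have ht0 : (0 : ℝ) ≤ t := by linarith
    have hsin := Real.mul_le_sin ht0 htπ
    have hsin2 : 1 / Real.pi ≤ Real.sin t := by
      have : 2 / Real.pi * (1 / 2) ≤ 2 / Real.pi * t := by
        have hpos : (0 : ℝ) ≤ 2 / Real.pi := by positivity
        nlinarith
      calc 1 / Real.pi = 2 / Real.pi * (1 / 2) := by ring
        _ ≤ 2 / Real.pi * t := this
        _ ≤ Real.sin t := hsin
    have hsin0 : 0 ≤ Real.sin t := by
      have : (0:ℝ) < 1 / Real.pi := by positivity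
      linarith
    rw [hkk, ← ht, abs_of_nonneg hsin0]
    have hmin : min 1 a ≤ 1 := min_le_left _ _
    have hpos : (0 : ℝ) ≤ 2 / Real.pi := by positivity
    calc 2 / Real.pi * min 1 a ≤ 2 / Real.pi * 1 := by nlinarith
      _ = 2 * (1 / Real.pi) := by ring
      _ ≤ 2 * Real.sin t := by linarith

section Main

universe v

variable {E : Type v} [NormedAddCommGroup E] [NormedSpace ℝ E]

/-- The family of unimodular diagonal entries attached to `x`. -/
def cfun (g : ℕ → E →L[ℝ] ℝ) (x : E) (i : ULift.{v} (ℕ × ℕ)) : ℂ :=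
  Complex.exp (((g i.down.1 x / ((i.down.2 : ℝ) + 1) : ℝ) : ℂ) * Complex.I)

lemma cfun_norm (g : ℕ → E →L[ℝ] ℝ) (x : E) (i : ULift.{v} (ℕ × ℕ)) :
    ‖cfun g x i‖ = 1 := by
  rw [cfun]
  exact Complex.norm_exp_ofReal_mul_I _

lemma cfun_le (g : ℕ → E →L[ℝ] ℝ) (x : E) : ∀ i, ‖cfun g x i‖ ≤ 1 :=
  fun i => (cfun_norm g x i).le

lemma cfun_add (g : ℕ → E →L[ℝ] ℝ) (x y : E) (i : ULift.{v} (ℕ × ℕ)) :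
    cfun g (x + y) i = cfun g x i * cfun g y i := by
  rw [cfun, cfun, cfun, ← Complex.exp_add]
  congr 1
  rw [map_add]
  push_cast
  ring

lemma cfun_zero (g : ℕ → E →L[ℝ] ℝ) (i : ULift.{v} (ℕ × ℕ)) :
    cfun g 0 i = 1 := by
  rw [cfun, map_zero]
  norm_num

lemma cfun_sub_norm (g : ℕ → E →L[ℝ] ℝ) (x y : E) (i : ULift.{v} (ℕ × ℕ)) :
    ‖cfun g x i - cfun g y i‖
      = 2 * |Real.sin (g i.down.1 (x - y) / (2 * ((i.down.2 : ℝ) + 1)))| := by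
  have hne : ((i.down.2 : ℝ) + 1) ≠ 0 := by positivity
  have h := norm_expI_sub_expI (g i.down.1 x / ((i.down.2 : ℝ) + 1))
    (g i.down.1 y / ((i.down.2 : ℝ) + 1))
  rw [show (g i.down.1 x / ((i.down.2 : ℝ) + 1) - g i.down.1 y / ((i.down.2 : ℝ) + 1)) / 2
      = g i.down.1 (x - y) / (2 * ((i.down.2 : ℝ) + 1)) by
        rw [map_sub, div_sub_div_same, div_div, mul_comm]] at h
  exact h

/-- The diagonal unitary representation operator attached to `x`. -/
def Fop (g : ℕ → E →L[ℝ] ℝ) (x : E) :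
    lp (fun _ : ULift.{v} (ℕ × ℕ) => ℂ) 2 →L[ℂ] lp (fun _ : ULift.{v} (ℕ × ℕ) => ℂ) 2 :=
  diag (cfun g x) (cfun_le g x)

lemma Fop_mem_unitary (g : ℕ → E →L[ℝ] ℝ) (x : E) :
    Fop g x ∈ unitary (lp (fun _ : ULift.{v} (ℕ × ℕ) => ℂ) 2
      →L[ℂ] lp (fun _ : ULift.{v} (ℕ × ℕ) => ℂ) 2) :=
  diag_mem_unitary (cfun g x) (cfun_norm g x)

lemma Fop_add (g : ℕ → E →L[ℝ] ℝ) (x y : E) :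
    Fop g (x + y) = Fop g x * Fop g y := by
  have hv : ∀ i, ‖cfun g x i * cfun g y i‖ ≤ 1 := fun i => by
    rw [← cfun_add g x y i]; exact cfun_le g _ i
  rw [Fop, Fop, Fop, diag_mul (cfun_le g x) (cfun_le g y) hv]
  exact diag_congr _ _ (cfun_add g x y)

lemma Fop_zero (g : ℕ → E →L[ℝ] ℝ) :
    Fop g (0 : E) = 1 := by
  have h1 : ∀ _ : ULift.{v} (ℕ × ℕ), ‖(1:ℂ)‖ ≤ 1 := fun _ => by norm_num
  rw [Fop, diag_congr _ h1 (cfun_zero g), diag_one]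

lemma Fop_dist_le (g : ℕ → E →L[ℝ] ℝ) (hg1 : ∀ n, ‖g n‖ ≤ 1) (x y : E) :
    ‖Fop g x - Fop g y‖ ≤ ‖x - y‖ := by
  refine diag_sub_norm_le _ _ (norm_nonneg _) (fun i => ?_)
  rw [cfun_sub_norm]
  have h1 : 2 * |Real.sin (g i.down.1 (x - y) / (2 * ((i.down.2 : ℝ) + 1)))|
      ≤ |g i.down.1 (x - y) / ((i.down.2 : ℝ) + 1)| := by
    have h := two_abs_sin_half_le (g i.down.1 (x - y) / ((i.down.2 : ℝ) + 1))
    rw [show g i.down.1 (x - y) / ((i.down.2 : ℝ) + 1) / 2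
        = g i.down.1 (x - y) / (2 * ((i.down.2 : ℝ) + 1)) by rw [div_div, mul_comm]] at h
    exact h
  have h2 : |g i.down.1 (x - y) / ((i.down.2 : ℝ) + 1)| ≤ |g i.down.1 (x - y)| := by
    rw [abs_div, abs_of_nonneg (by positivity : (0:ℝ) ≤ (i.down.2 : ℝ) + 1)]
    apply div_le_self (abs_nonneg _)
    simp
  have h3 : |g i.down.1 (x - y)| ≤ ‖x - y‖ := by
    calc |g i.down.1 (x - y)| ≤ ‖g i.down.1‖ * ‖x - y‖ := (g i.down.1).le_opNorm _
      _ ≤ 1 * ‖x - y‖ := mul_le_mul_of_nonneg_right (hg1 _) (norm_nonneg _)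
      _ = ‖x - y‖ := one_mul _
  linarith

lemma Fop_lower (g : ℕ → E →L[ℝ] ℝ)
    (hg2 : ∀ z : E, z ≠ 0 → ∃ n, ‖z‖ / 2 < |g n z|) (x y : E) :
    2 / Real.pi * min 1 (‖x - y‖ / 2) ≤ ‖Fop g x - Fop g y‖ := by
  classical
  rcases eq_or_ne x y with rfl | hxy
  · have hmin : min 1 (‖x - x‖ / 2) = 0 := by simp
    rw [hmin, mul_zero]
    exact norm_nonneg _
  · have hz : x - y ≠ 0 := sub_ne_zero.mpr hxy
    obtain ⟨n, hn⟩ := hg2 (x - y) hz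
    obtain ⟨m, hm⟩ := exists_m |g n (x - y)| (abs_nonneg _)
    have hkey : 2 / Real.pi * min 1 (‖x - y‖ / 2)
        ≤ ‖cfun g x (ULift.up (n, m)) - cfun g y (ULift.up (n, m))‖ := by
      rw [cfun_sub_norm]
      have habs : |Real.sin (g n (x - y) / (2 * ((m : ℝ) + 1)))|
          = |Real.sin (|g n (x - y)| / (2 * ((m : ℝ) + 1)))| := by
        rcases abs_cases (g n (x - y)) with ⟨h, _⟩ | ⟨h, _⟩
        · rw [h]
        · rw [h, show -g n (x - y) / (2 * ((m : ℝ) + 1))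
              = -(g n (x - y) / (2 * ((m : ℝ) + 1))) by ring, Real.sin_neg, abs_neg]
      have hgoal : (ULift.up (n, m) : ULift.{v} (ℕ × ℕ)).down.1 = n := rfl
      calc 2 / Real.pi * min 1 (‖x - y‖ / 2)
          ≤ 2 / Real.pi * min 1 |g n (x - y)| := by
            have hmm : min 1 (‖x - y‖ / 2) ≤ min 1 |g n (x - y)| := by
              refine le_min (min_le_left _ _) ?_
              calc min 1 (‖x - y‖ / 2) ≤ ‖x - y‖ / 2 := min_le_right _ _
                _ ≤ |g n (x - y)| := hn.le
            have hpos : (0:ℝ) ≤ 2 / Real.pi := by positivity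
            exact mul_le_mul_of_nonneg_left hmm hpos
        _ ≤ 2 * |Real.sin (|g n (x - y)| / (2 * ((m : ℝ) + 1)))| := hm
        _ = 2 * |Real.sin (g n (x - y) / (2 * ((m : ℝ) + 1)))| := by rw [habs]
    calc 2 / Real.pi * min 1 (‖x - y‖ / 2)
        ≤ ‖cfun g x (ULift.up (n, m)) - cfun g y (ULift.up (n, m))‖ := hkey
      _ ≤ ‖Fop g x - Fop g y‖ := le_diag_sub_norm _ _ _

lemma Fop_injective (g : ℕ → E →L[ℝ] ℝ)
    (hg2 : ∀ z : E, z ≠ 0 → ∃ n, ‖z‖ / 2 < |g n z|) :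
    Function.Injective (Fop (E := E) g) := by
  intro a b h
  by_contra hab
  have hlow := Fop_lower g hg2 a b
  rw [h, sub_self, norm_zero] at hlow
  have hz : a - b ≠ 0 := sub_ne_zero.mpr hab
  have hpos : 0 < min 1 (‖a - b‖ / 2) := by
    have : 0 < ‖a - b‖ := norm_pos_iff.mpr hz
    have h1 : (0:ℝ) < 1 := one_pos
    positivity
  have : (0:ℝ) < 2 / Real.pi * min 1 (‖a - b‖ / 2) := by
    have := Real.pi_pos
    positivity
  linarith

end Main

end NURAux

/-- Every separable real Banach space, as an additive topological group with the norm topology,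
is norm unitarily representable. -/
theorem stmt7 (E : Type u) [NormedAddCommGroup E] [NormedSpace ℝ E] [CompleteSpace E]
    [TopologicalSpace.SeparableSpace E] :
    IsNUR (Multiplicative E) := by
  classical
  obtain ⟨g, hg1, hg2⟩ := NURAux.exists_norming E
  set K := lp (fun _ : ULift.{u} (ℕ × ℕ) => ℂ) 2 with hK
  let U : E → unitary (K →L[ℂ] K) :=
    fun x => ⟨NURAux.Fop g x, NURAux.Fop_mem_unitary g x⟩
  let π : Multiplicative E →* unitary (K →L[ℂ] K) :=
    { toFun := fun x => U (Multiplicative.toAdd x)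
      map_one' := Subtype.ext (NURAux.Fop_zero g)
      map_mul' := fun x y => Subtype.ext (NURAux.Fop_add g _ _) }
  have hFinj : Function.Injective (NURAux.Fop (E := E) g) := NURAux.Fop_injective g hg2
  have hUE : IsUniformEmbedding (fun x : E => NURAux.Fop g x) := by
    rw [Metric.isUniformEmbedding_iff']
    constructor
    · intro ε hε
      refine ⟨ε, hε, fun {a b} h => lt_of_le_of_lt ?_ h⟩
      rw [dist_eq_norm, dist_eq_norm]
      exact NURAux.Fop_dist_le g hg1 a b
    · intro δ hδ
      have hπpos := Real.pi_pos
      refine ⟨2 / Real.pi * min 1 (δ / 2), by positivity, fun {a b} h => ?_⟩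
      by_contra hcon
      push_neg at hcon
      rw [dist_eq_norm] at hcon h
      have hlow := NURAux.Fop_lower g hg2 a b
      have hmono : 2 / Real.pi * min 1 (δ / 2) ≤ 2 / Real.pi * min 1 (‖a - b‖ / 2) := by
        have hmm : min 1 (δ / 2) ≤ min 1 (‖a - b‖ / 2) :=
          min_le_min le_rfl (by linarith)
        exact mul_le_mul_of_nonneg_left hmm (by positivity)
      linarith
  have hcontU : Continuous (fun x : E => U x) :=
    Continuous.subtype_mk hUE.isUniformInducing.uniformContinuous.continuous _
  have hembU : Topology.IsEmbedding (fun x : E => U x) :=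
    Topology.IsEmbedding.of_comp hcontU continuous_subtype_val hUE.isEmbedding
  have hrangeU : IsClosed (Set.range (fun x : E => U x)) := by
    have hcr : IsClosed (Set.range (fun x : E => NURAux.Fop g x)) :=
      hUE.isUniformInducing.isComplete_range.isClosed
    have heq : Set.range (fun x : E => U x)
        = Subtype.val ⁻¹' Set.range (fun x : E => NURAux.Fop g x) := by
      ext w
      constructor
      · rintro ⟨x, rfl⟩
        exact ⟨x, rfl⟩
      · rintro ⟨x, hx⟩
        exact ⟨x, Subtype.ext hx⟩
    rw [heq]
    exact hcr.preimage continuous_subtype_val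
  refine ⟨K, inferInstance, inferInstance, inferInstance, π, ?_, ?_⟩
  · intro a b h
    have h2 : NURAux.Fop g (Multiplicative.toAdd a) = NURAux.Fop g (Multiplicative.toAdd b) :=
      congrArg Subtype.val h
    exact Multiplicative.toAdd.injective (hFinj h2)
  · exact ⟨hembU, hrangeU⟩

end
end

section
/- Let G be the unitary group of the C*-algebra C(𝕋, ℂ) of continuous complex-valued functions on the unit circle 𝕋, equipped with the supremum norm, and let V = {u ∈ G : ‖u − 1‖ < 2}. Then for every natural number n and every finite subset F ⊆ G one has F·Vⁿ ≠ G. In particular, G with the norm topology is not bounded. -/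
open Topology Pointwise

noncomputable section

/-- A topological group `G` is bounded if for every neighborhood `V` of the identity there
exist `n ∈ ℕ` and a finite set `F ⊆ G` with `G = Vⁿ·F`. -/
def IsBoundedTopologicalGroup (G : Type*) [Group G] [TopologicalSpace G] : Prop :=
  ∀ V ∈ nhds (1 : G), ∃ (n : ℕ) (F : Set G), F.Finite ∧ V ^ n * F = Set.univ

/-- The unit circle `𝕋 ⊆ ℂ`. -/
abbrev Torus : Type := Metric.sphere (0 : ℂ) 1

namespace Stmt11Aux

open Complex

lemma norm_unitary_apply (u : unitary C(Torus, ℂ)) (z : Torus) :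
    ‖(u : C(Torus, ℂ)) z‖ = 1 := by
  have h := u.2
  rw [Unitary.mem_iff] at h
  have h1 := congrArg (fun f : C(Torus, ℂ) => f z) h.1
  simp only [ContinuousMap.mul_apply, ContinuousMap.one_apply, ContinuousMap.star_apply] at h1
  have h2 : (Complex.normSq ((u : C(Torus, ℂ)) z) : ℂ) = 1 := by
    rw [Complex.normSq_eq_conj_mul_self]; exact h1
  have h3 : Complex.normSq ((u : C(Torus, ℂ)) z) = 1 := by exact_mod_cast h2
  have h4 : ‖(u : C(Torus, ℂ)) z‖ ^ 2 = 1 := by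
    rw [← Complex.sq_norm] at h3; exact h3
  nlinarith [norm_nonneg ((u : C(Torus, ℂ)) z)]

/-- The set of unitaries admitting a continuous logarithm. -/
def E : Set (unitary C(Torus, ℂ)) :=
  {u | ∃ h : C(Torus, ℂ), ∀ z, (u : C(Torus, ℂ)) z = Complex.exp (h z)}

lemma one_mem_E : (1 : unitary C(Torus, ℂ)) ∈ E :=
  ⟨0, fun z => by simp⟩

lemma mul_mem_E {u v : unitary C(Torus, ℂ)} (hu : u ∈ E) (hv : v ∈ E) : u * v ∈ E := by
  obtain ⟨h1, hh1⟩ := hu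
  obtain ⟨h2, hh2⟩ := hv
  exact ⟨h1 + h2, fun z => by
    simp only [Submonoid.coe_mul, ContinuousMap.mul_apply, ContinuousMap.add_apply,
      Complex.exp_add, hh1 z, hh2 z]⟩

lemma inv_mem_E {u : unitary C(Torus, ℂ)} (hu : u ∈ E) : u⁻¹ ∈ E := by
  obtain ⟨h, hh⟩ := hu
  refine ⟨star h, fun z => ?_⟩
  rw [← Unitary.star_eq_inv, Unitary.coe_star]
  show star ((u : C(Torus, ℂ))) z = _
  rw [ContinuousMap.star_apply, ContinuousMap.star_apply, hh z]
  exact (Complex.exp_conj _).symm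

lemma V_subset_E :
    {u : unitary C(Torus, ℂ) | ‖(u : C(Torus, ℂ)) - 1‖ < 2} ⊆ E := by
  intro u hu
  have hslit : ∀ z, (u : C(Torus, ℂ)) z ∈ Complex.slitPlane := by
    intro z
    have hz : ‖((u : C(Torus, ℂ)) - 1) z‖ < 2 :=
      ((ContinuousMap.norm_lt_iff _ (by norm_num)).1 hu) z
    rw [ContinuousMap.sub_apply, ContinuousMap.one_apply] at hz
    have hn := norm_unitary_apply u z
    set w := (u : C(Torus, ℂ)) z with hw
    rw [Complex.mem_slitPlane_iff]
    by_contra hcon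
    push_neg at hcon
    obtain ⟨hre, him⟩ := hcon
    -- w has im = 0, re ≤ 0, |w| = 1 hence w = -1
    have : |w.re| = 1 := by
      rw [Complex.abs_re_eq_norm.mpr him]; exact hn
    have hre1 : w.re = -1 := by
      rcases abs_eq (by norm_num : (0:ℝ) ≤ 1) |>.1 this with h1 | h1
      · linarith
      · exact h1
    have hwm : w = -1 := by
      apply Complex.ext <;> simp [hre1, him]
    rw [hwm] at hz
    have : ‖(-1 - 1 : ℂ)‖ = 2 := by norm_num
    rw [this] at hz
    exact lt_irrefl _ hz
  refine ⟨⟨fun z => Complex.log ((u : C(Torus, ℂ)) z),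
    (u : C(Torus, ℂ)).continuous.clog hslit⟩, fun z => ?_⟩
  exact (Complex.exp_log (Complex.slitPlane_ne_zero (hslit z))).symm

lemma pow_subset_E (n : ℕ) :
    {u : unitary C(Torus, ℂ) | ‖(u : C(Torus, ℂ)) - 1‖ < 2} ^ n ⊆ E := by
  induction n with
  | zero => simp only [pow_zero]; intro u hu; rw [Set.mem_one] at hu; rw [hu]; exact one_mem_E
  | succ n ih =>
    rw [pow_succ]
    rintro u ⟨a, ha, b, hb, rfl⟩
    exact mul_mem_E (ih ha) (V_subset_E hb)

/-- The identity function as a unitary element. -/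
def idU : unitary C(Torus, ℂ) :=
  ⟨⟨fun z => (z : ℂ), continuous_subtype_val⟩, by
    rw [Unitary.mem_iff]
    constructor <;>
    · ext z
      have hz : ‖(z : ℂ)‖ = 1 := by
        have := z.2
        simpa using mem_sphere_zero_iff_norm.mp this
      simp only [ContinuousMap.mul_apply, ContinuousMap.one_apply, ContinuousMap.star_apply,
        ContinuousMap.coe_mk]
      rw [Complex.star_def]
      first
        | rw [← Complex.normSq_eq_conj_mul_self]; simp [Complex.normSq_eq_norm_sq, hz]
        | rw [Complex.mul_conj]; simp [Complex.normSq_eq_norm_sq, hz]⟩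

lemma idU_pow_apply (m : ℕ) (z : Torus) :
    ((idU ^ m : unitary C(Torus, ℂ)) : C(Torus, ℂ)) z = (z : ℂ) ^ m := by
  induction m with
  | zero => simp
  | succ n ih =>
    rw [pow_succ, pow_succ, Submonoid.coe_mul, ContinuousMap.mul_apply, ih]
    rfl

end Stmt11Aux

namespace Stmt11Aux
open Complex

def circ (θ : ℝ) : Torus := ⟨Complex.exp (θ * Complex.I), by
  rw [mem_sphere_zero_iff_norm]
  simpa using Complex.abs_exp_ofReal_mul_I θ⟩

lemma continuous_circ : Continuous circ := by
  apply Continuous.subtype_mk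
  exact Complex.continuous_exp.comp (continuous_ofReal.mul continuous_const)

lemma idU_pow_not_mem_E (m : ℕ) (hm : 1 ≤ m) : idU ^ m ∉ E := by
  rintro ⟨h, hh⟩
  set g : ℝ → ℝ := fun θ => ((h (circ θ)).im - m * θ) / (2 * Real.pi) with hg
  have hg_int : ∀ θ, ∃ k : ℤ, g θ = k := by
    intro θ
    have h1 : Complex.exp (h (circ θ)) = Complex.exp (θ * Complex.I) ^ m := by
      rw [← hh (circ θ), idU_pow_apply]
      rfl
    have h2 : Complex.exp (h (circ θ) - m * (θ * Complex.I)) = 1 := by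
      rw [Complex.exp_sub, h1, ← Complex.exp_nat_mul]
      exact div_self (Complex.exp_ne_zero _)
    obtain ⟨k, hk⟩ := Complex.exp_eq_one_iff.1 h2
    refine ⟨k, ?_⟩
    have him : (h (circ θ)).im - m * θ = k * (2 * Real.pi) := by
      have := congrArg Complex.im hk
      simpa using this
    have hπ : (2 : ℝ) * Real.pi ≠ 0 := by positivity
    rw [hg]
    field_simp
    linarith [him]
  have hg_cont : Continuous g := by
    apply Continuous.div_const
    exact (Complex.continuous_im.comp (h.continuous.comp continuous_circ)).sub
      (continuous_const.mul continuous_id)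
  have hc0 : circ (2 * Real.pi) = circ 0 := by
    apply Subtype.ext
    show Complex.exp _ = Complex.exp _
    norm_num [Complex.exp_two_pi_mul_I]
  have hπpos : (0:ℝ) < 2 * Real.pi := by positivity
  have hg2π : g (2 * Real.pi) = g 0 - m := by
    rw [hg]
    simp only [hc0]
    field_simp
    ring
  obtain ⟨k0, hk0⟩ := hg_int 0
  have hmem : g 0 - 1/2 ∈ Set.Icc (g (2*Real.pi)) (g 0) := by
    have hm' : (1:ℝ) ≤ m := by exact_mod_cast hm
    constructor
    · rw [hg2π]; linarith
    · linarith
  obtain ⟨θ, _, hθeq⟩ := intermediate_value_Icc' (le_of_lt hπpos) hg_cont.continuousOn hmem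
  obtain ⟨k, hk⟩ := hg_int θ
  rw [hk, hk0] at hθeq
  have h2k : ((2*(k0 - k) : ℤ) : ℝ) = 1 := by push_cast; linarith
  have : (2*(k0 - k) : ℤ) = 1 := by exact_mod_cast h2k
  omega

end Stmt11Aux


/-- In the unitary group `G` of `C(𝕋, ℂ)`, with `V = {u : ‖u - 1‖ < 2}`, one has `F·Vⁿ ≠ G`
for every `n` and every finite `F ⊆ G`.  In particular, `G` with the norm topology is not
bounded. -/
theorem stmt11 :
    (∀ (n : ℕ) (F : Set (unitary C(Torus, ℂ))), F.Finite →
      F * {u : unitary C(Torus, ℂ) | ‖(u : C(Torus, ℂ)) - 1‖ < 2} ^ n ≠ Set.univ) ∧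
    ¬ IsBoundedTopologicalGroup (unitary C(Torus, ℂ)) := by
  open Stmt11Aux in
  have key : ∀ (n : ℕ) (F : Set (unitary C(Torus, ℂ))), F.Finite →
      F * {u : unitary C(Torus, ℂ) | ‖(u : C(Torus, ℂ)) - 1‖ < 2} ^ n ≠ Set.univ := by
    intro n F hF hEq
    have hch : ∀ m : ℕ, ∃ f ∈ F, ∃ v,
        v ∈ {u : unitary C(Torus, ℂ) | ‖(u : C(Torus, ℂ)) - 1‖ < 2} ^ n ∧ idU ^ m = f * v := by
      intro m
      have hmem : idU ^ m ∈ F * {u : unitary C(Torus, ℂ) | ‖(u : C(Torus, ℂ)) - 1‖ < 2} ^ n :=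
        hEq ▸ Set.mem_univ _
      rcases hmem with ⟨f, hf, v, hv, hmul⟩
      exact ⟨f, hf, v, hv, hmul.symm⟩
    choose f hfF v hvV hfv using hch
    obtain ⟨a, -, b, -, hab, hfab⟩ :=
      Set.infinite_univ.exists_ne_map_eq_of_mapsTo
        (f := f) (fun m _ => hfF m) hF
    wlog hlt : a < b generalizing a b
    · exact this b a hab.symm hfab.symm (by omega)
    have hvE : ∀ m, v m ∈ E := fun m => pow_subset_E n (hvV m)
    have hE1 : idU ^ (b - a) ∈ E := by
      have h1 : idU ^ (b - a) = idU ^ b * (idU ^ a)⁻¹ := by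
        rw [eq_mul_inv_iff_mul_eq, ← pow_add, Nat.sub_add_cancel hlt.le]
      have h2 : idU ^ b * (idU ^ a)⁻¹ = v b * (v a)⁻¹ := by
        rw [hfv b, hfv a, ← hfab, mul_inv, mul_mul_mul_comm, mul_inv_cancel, one_mul]
      rw [h1, h2]
      exact mul_mem_E (hvE b) (inv_mem_E (hvE a))
    exact idU_pow_not_mem_E (b - a) (by omega) hE1
  refine ⟨key, fun hb => ?_⟩
  have hV : {u : unitary C(Torus, ℂ) | ‖(u : C(Torus, ℂ)) - 1‖ < 2} ∈
      nhds (1 : unitary C(Torus, ℂ)) := by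
    have hopen : IsOpen {u : unitary C(Torus, ℂ) | ‖(u : C(Torus, ℂ)) - 1‖ < 2} := by
      have heq : {u : unitary C(Torus, ℂ) | ‖(u : C(Torus, ℂ)) - 1‖ < 2} =
          (Subtype.val) ⁻¹' (Metric.ball (1 : C(Torus, ℂ)) 2) := by
        ext u; simp [Metric.mem_ball, dist_eq_norm]
      rw [heq]
      exact Metric.isOpen_ball.preimage continuous_subtype_val
    exact hopen.mem_nhds (by simp)
  obtain ⟨n, F, hF, hEq⟩ := hb _ hV
  exact key n F hF (by rw [mul_comm] at hEq; exact hEq)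
end
end

section
/- Let X be a compact Hausdorff topological space. The unitary group of the C*-algebra C(X, ℂ) of continuous complex-valued functions on X, equipped with the supremum-norm topology, is bounded if and only if X is totally disconnected. -/
open Topology Pointwise

universe u

noncomputable section

section Helpers

set_option linter.unusedSectionVars false

variable {X : Type*} [TopologicalSpace X] [CompactSpace X] [T2Space X]

lemma unitary_apply_norm (u : unitary C(X, ℂ)) (x : X) : ‖(u : C(X,ℂ)) x‖ = 1 := by
  have h := Unitary.star_mul_self_of_mem u.2
  have h1 : (starRingEnd ℂ) ((u : C(X,ℂ)) x) * (u : C(X,ℂ)) x = 1 :=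
    congrArg (fun f : C(X,ℂ) => f x) h
  have h2 : (Complex.normSq ((u : C(X,ℂ)) x) : ℂ) = 1 := by
    rw [Complex.normSq_eq_conj_mul_self]; exact h1
  have h3 : Complex.normSq ((u : C(X,ℂ)) x) = 1 := by exact_mod_cast h2
  rw [Complex.norm_def, h3, Real.sqrt_one]

noncomputable def expU (g : C(X, ℝ)) : unitary C(X, ℂ) :=
  ⟨⟨fun x => Complex.exp (g x * Complex.I), by fun_prop⟩, by
    constructor <;>
    · ext x
      simp [ContinuousMap.star_apply, ← Complex.exp_conj, ← Complex.exp_add]⟩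

lemma expU_apply (g : C(X, ℝ)) (x : X) : (expU g : C(X,ℂ)) x = Complex.exp (g x * Complex.I) := rfl

lemma expU_mul (g h : C(X, ℝ)) : expU g * expU h = expU (g + h) := by
  ext x
  simp [expU, Complex.exp_add, add_mul]

lemma expU_pow (g : C(X, ℝ)) (n : ℕ) : (expU g) ^ n = expU (n • g) := by
  induction n with
  | zero => ext x; simp [expU]
  | succ n ih => rw [pow_succ, ih, expU_mul, ← succ_nsmul]

lemma re_pos_of_close {z : ℂ} (h : ‖z - 1‖ < 1) : 0 < z.re := by
  have h1 : |(z - 1).re| ≤ ‖z - 1‖ := Complex.abs_re_le_norm _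
  have : (z - 1).re = z.re - 1 := by simp
  rw [this] at h1
  have := abs_le.1 h1
  linarith

lemma ball_apply {u : unitary C(X,ℂ)} (hu : dist u 1 < (2:ℝ)⁻¹) (x : X) :
    ‖(u : C(X,ℂ)) x - 1‖ < (2:ℝ)⁻¹ := by
  have h1 : dist (u : C(X,ℂ)) 1 < (2:ℝ)⁻¹ := by
    have : dist (u : C(X,ℂ)) ((1 : unitary C(X,ℂ)) : C(X,ℂ)) < 2⁻¹ := by
      rw [← Subtype.dist_eq]; exact hu
    simpa using this
  rw [dist_eq_norm] at h1
  have h2 : ‖((u : C(X,ℂ)) - 1) x‖ ≤ ‖(u : C(X,ℂ)) - 1‖ := ContinuousMap.norm_coe_le_norm _ x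
  have h3 : ((u : C(X,ℂ)) - 1) x = (u : C(X,ℂ)) x - 1 := by simp
  rw [h3] at h2
  calc ‖(u : C(X,ℂ)) x - 1‖ = ‖(u : C(X,ℂ)) x - 1‖ := rfl
    _ ≤ _ := h2
    _ < _ := h1

open Real in
lemma pow_log (n : ℕ) (a : unitary C(X,ℂ))
    (ha : a ∈ (Metric.ball (1 : unitary C(X,ℂ)) (2:ℝ)⁻¹) ^ n) :
    ∃ g : X → ℝ, Continuous g ∧ (∀ x, |g x| ≤ n * (π/2)) ∧
      ∀ x, Complex.exp (g x * Complex.I) = (a : C(X,ℂ)) x := by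
  induction n generalizing a with
  | zero =>
    rw [pow_zero, Set.mem_one] at ha
    exact ⟨0, continuous_const, by simp [Real.pi_nonneg], by simp [ha]⟩
  | succ n ih =>
    rw [pow_succ] at ha
    obtain ⟨b, hb, c, hc, hbc⟩ := ha
    obtain ⟨g, hgc, hgb, hge⟩ := ih b hb
    rw [Metric.mem_ball] at hc
    have hcx : ∀ x, ‖(c : C(X,ℂ)) x - 1‖ < (2:ℝ)⁻¹ := ball_apply hc
    have hre : ∀ x, 0 < ((c : C(X,ℂ)) x).re := fun x =>
      re_pos_of_close (lt_trans (hcx x) (by norm_num))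
    refine ⟨fun x => g x + Complex.arg ((c : C(X,ℂ)) x), ?_, ?_, ?_⟩
    · refine hgc.add (continuous_iff_continuousAt.2 fun x => ?_)
      exact (Complex.continuousAt_arg (Or.inl (hre x))).comp
        ((c : C(X,ℂ)).continuous.continuousAt)
    · intro x
      have h1 : |Complex.arg ((c : C(X,ℂ)) x)| ≤ π / 2 :=
        Complex.abs_arg_le_pi_div_two_iff.2 (le_of_lt (hre x))
      have := abs_add_le (g x) (Complex.arg ((c : C(X,ℂ)) x))
      push_cast
      calc |g x + Complex.arg ((c : C(X,ℂ)) x)| ≤ |g x| + |Complex.arg ((c : C(X,ℂ)) x)| := this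
        _ ≤ n * (π/2) + π/2 := add_le_add (hgb x) h1
        _ = (n + 1) * (π/2) := by ring
    · intro x
      have habs : ‖(c : C(X,ℂ)) x‖ = 1 := unitary_apply_norm c x
      have h1 : Complex.exp (Complex.arg ((c : C(X,ℂ)) x) * Complex.I) = (c : C(X,ℂ)) x := by
        have := Complex.norm_mul_exp_arg_mul_I ((c : C(X,ℂ)) x)
        rwa [habs, Complex.ofReal_one, one_mul] at this
      have : (a : C(X,ℂ)) x = (b : C(X,ℂ)) x * (c : C(X,ℂ)) x := by
        rw [← hbc]; rfl
      rw [this, ← hge x, ← h1]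
      push_cast
      rw [← Complex.exp_add]
      ring_nf

lemma int_valued_const {s : Set X} (hs : IsPreconnected s) {ψ : X → ℝ} (hψ : Continuous ψ)
    (hint : ∀ x, ∃ m : ℤ, ψ x = m) {x₀ x₁ : X} (h₀ : x₀ ∈ s) (h₁ : x₁ ∈ s) :
    ψ x₀ = ψ x₁ := by
  have key : ∀ a b : X, a ∈ s → b ∈ s → ψ a < ψ b → False := by
    intro a b ha hb hab
    obtain ⟨ma, hma⟩ := hint a
    obtain ⟨mb, hmb⟩ := hint b
    have hmamb : ma < mb := by exact_mod_cast hma ▸ hmb ▸ hab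
    have h2 : ψ a + 1 ≤ ψ b := by
      rw [hma, hmb]
      exact_mod_cast Int.add_one_le_iff.2 hmamb
    have hmem : ψ a + 2⁻¹ ∈ Set.Icc (ψ a) (ψ b) := ⟨by linarith, by linarith⟩
    obtain ⟨x, hxs, hx⟩ := hs.intermediate_value ha hb (hψ.continuousOn) hmem
    obtain ⟨m, hm⟩ := hint x
    rw [hm, hma] at hx
    have : (2 * m : ℤ) = 2 * ma + 1 := by
      have : (2 * m : ℝ) = 2 * ma + 1 := by push_cast; linarith
      exact_mod_cast this
    omega
  rcases lt_trichotomy (ψ x₀) (ψ x₁) with h | h | h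
  · exact absurd (key _ _ h₀ h₁ h) not_false
  · exact h
  · exact absurd (key _ _ h₁ h₀ h) not_false

set_option maxHeartbeats 1000000 in
open Real in
lemma forward_dir (hB : IsBoundedTopologicalGroup (unitary C(X,ℂ))) :
    TotallyDisconnectedSpace X := by
  rw [totallyDisconnectedSpace_iff_connectedComponent_singleton]
  by_contra hTD
  push_neg at hTD
  obtain ⟨x, hx⟩ := hTD
  have hxmem : x ∈ connectedComponent x := mem_connectedComponent
  have : ∃ y ∈ connectedComponent x, y ≠ x := by
    by_contra hy
    push_neg at hy
    exact hx (Set.eq_singleton_iff_unique_mem.2 ⟨hxmem, hy⟩)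
  obtain ⟨y, hy, hyx⟩ := this
  -- Urysohn
  obtain ⟨φ, hφ0, hφ1, hφ01⟩ := exists_continuous_zero_one_of_isClosed
    (isClosed_singleton (x := x)) (isClosed_singleton (x := y))
    (Set.disjoint_singleton.2 (Ne.symm hyx))
  have hφx : φ x = 0 := hφ0 rfl
  have hφy : φ y = 1 := hφ1 rfl
  set V := Metric.ball (1 : unitary C(X,ℂ)) (2:ℝ)⁻¹ with hV
  obtain ⟨n, F, hF, hcov⟩ := hB V (Metric.ball_mem_nhds _ (by norm_num))
  set e : ℕ → unitary C(X,ℂ) := fun k => expU ((2 * π * k) • φ) with he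
  have hdecomp : ∀ k, ∃ a ∈ V ^ n, ∃ h ∈ F, a * h = e k := by
    intro k
    have : e k ∈ V ^ n * F := hcov ▸ Set.mem_univ _
    exact Set.mem_mul.1 this
  choose a ha h hh heq using hdecomp
  -- pigeonhole
  have hcard : hF.toFinset.card < (Finset.range (hF.toFinset.card + 1)).card := by
    simp
  obtain ⟨j₁, hj₁, j₂, hj₂, hjne, hjeq⟩ :=
    Finset.exists_ne_map_eq_of_card_lt_of_maps_to hcard
      (f := fun j => h (j * (n+1))) (fun j _ => hF.mem_toFinset.2 (hh _))
  -- wlog j₁ < j₂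
  wlog hlt : j₁ < j₂ generalizing j₁ j₂
  · exact this j₂ hj₂ j₁ hj₁ hjne.symm hjeq.symm (by omega)
  set k₁ := j₁ * (n+1) with hk₁
  set k₂ := j₂ * (n+1) with hk₂
  have hgrp : e k₂ * a k₁ = a k₂ * e k₁ := by
    calc e k₂ * a k₁ = a k₂ * h k₂ * a k₁ := by rw [heq]
      _ = a k₂ * h k₁ * a k₁ := by rw [hjeq]
      _ = a k₂ * a k₁ * h k₁ := by rw [mul_right_comm]
      _ = a k₂ * (a k₁ * h k₁) := by rw [mul_assoc]
      _ = a k₂ * e k₁ := by rw [heq]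
  obtain ⟨g₁, hg₁c, hg₁b, hg₁e⟩ := pow_log n (a k₁) (ha k₁)
  obtain ⟨g₂, hg₂c, hg₂b, hg₂e⟩ := pow_log n (a k₂) (ha k₂)
  -- pointwise integer relation
  have hint : ∀ z : X, ∃ m : ℤ,
      (2*π*k₂*φ z + g₁ z - g₂ z - 2*π*k₁*φ z)/(2*π) = m := by
    intro z
    have happly : ((e k₂ * a k₁ : unitary C(X,ℂ)) : C(X,ℂ)) z
        = ((a k₂ * e k₁ : unitary C(X,ℂ)) : C(X,ℂ)) z := by rw [hgrp]
    have hL : ((e k₂ * a k₁ : unitary C(X,ℂ)) : C(X,ℂ)) z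
        = Complex.exp (((2*π*k₂*φ z + g₁ z : ℝ) : ℂ) * Complex.I) := by
      have h0 : ((e k₂ * a k₁ : unitary C(X,ℂ)) : C(X,ℂ)) z
          = (e k₂ : C(X,ℂ)) z * ((a k₁ : unitary C(X,ℂ)) : C(X,ℂ)) z := by
        rw [Submonoid.coe_mul]; rfl
      rw [h0, expU_apply, ← hg₁e z, ← Complex.exp_add]
      congr 1
      rw [ContinuousMap.smul_apply, smul_eq_mul]
      push_cast
      ring
    have hR : ((a k₂ * e k₁ : unitary C(X,ℂ)) : C(X,ℂ)) z
        = Complex.exp (((g₂ z + 2*π*k₁*φ z : ℝ) : ℂ) * Complex.I) := by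
      have h0 : ((a k₂ * e k₁ : unitary C(X,ℂ)) : C(X,ℂ)) z
          = ((a k₂ : unitary C(X,ℂ)) : C(X,ℂ)) z * (e k₁ : C(X,ℂ)) z := by
        rw [Submonoid.coe_mul]; rfl
      rw [h0, expU_apply, ← hg₂e z, ← Complex.exp_add]
      congr 1
      rw [ContinuousMap.smul_apply, smul_eq_mul]
      push_cast
      ring
    rw [hL, hR, Complex.exp_eq_exp_iff_exists_int] at happly
    obtain ⟨m, hm⟩ := happly
    refine ⟨m, ?_⟩
    have hreal : (2*π*k₂*φ z + g₁ z : ℝ) = (g₂ z + 2*π*k₁*φ z) + m * (2*π) := by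
      have h2 : ((2*π*k₂*φ z + g₁ z : ℝ) : ℂ) = ((g₂ z + 2*π*k₁*φ z + m * (2*π) : ℝ) : ℂ) := by
        apply mul_right_cancel₀ Complex.I_ne_zero
        rw [hm]
        push_cast
        ring
      exact_mod_cast h2
    have hπ : (2*π) ≠ 0 := by positivity
    field_simp
    linarith
  have hψc : Continuous (fun z : X => (2*π*k₂*φ z + g₁ z - g₂ z - 2*π*k₁*φ z)/(2*π)) := by
    fun_prop
  have hcst := int_valued_const isPreconnected_connectedComponent hψc hint hxmem hy
  simp only [hφx, hφy] at hcst
  have hπpos := Real.pi_pos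
  have hπne : (2*π) ≠ 0 := by positivity
  rw [div_eq_div_iff hπne hπne] at hcst
  have hcst2 := mul_right_cancel₀ hπne hcst
  simp only [mul_zero, mul_one, zero_add, sub_zero] at hcst2
  have hb1 := abs_le.1 (hg₁b x); have hb2 := abs_le.1 (hg₂b x)
  have hb3 := abs_le.1 (hg₁b y); have hb4 := abs_le.1 (hg₂b y)
  have hkk : (k₂ : ℝ) - k₁ ≥ n + 1 := by
    have : k₁ + (n+1) ≤ k₂ := by
      rw [hk₁, hk₂]
      calc j₁ * (n+1) + (n+1) = (j₁ + 1) * (n+1) := by ring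
        _ ≤ j₂ * (n+1) := Nat.mul_le_mul_right _ hlt
    have := (Nat.cast_le (α := ℝ)).2 this
    push_cast at this
    linarith
  have h5 : 2*π*((k₂:ℝ)-k₁) ≥ 2*π*((n:ℝ)+1) := by nlinarith
  nlinarith [hcst2, h5, hb1.2, hb2.1, hb3.1, hb4.2]

lemma indicator_continuous_of_clopen {s : Set X} (hs : IsClopen s) {h : X → ℝ}
    (hh : ContinuousOn h s) : Continuous (s.indicator h) := by
  rw [continuous_iff_continuousAt]
  intro x
  by_cases hx : x ∈ s
  · have h1 : ContinuousAt h x := hh.continuousAt (hs.isOpen.mem_nhds hx)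
    apply h1.congr
    filter_upwards [hs.isOpen.mem_nhds hx] with y hy
    exact (Set.indicator_of_mem hy h).symm
  · apply ContinuousAt.congr (continuousAt_const (y := (0:ℝ)))
    filter_upwards [hs.isClosed.isOpen_compl.mem_nhds hx] with y hy
    exact (Set.indicator_of_notMem hy h).symm

open Real in
lemma exists_log [TotallyDisconnectedSpace X] (f : unitary C(X,ℂ)) :
    ∃ g : C(X,ℝ), (∀ x, |g x| ≤ 2*π) ∧
      ∀ x, Complex.exp (g x * Complex.I) = (f : C(X,ℂ)) x := by
  classical
  have hbasis := isTopologicalBasis_isClopen (X := X)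
  have hO : ∀ x : X, ∃ U : Set X, IsClopen U ∧ x ∈ U ∧
      U ⊆ (f : C(X,ℂ)) ⁻¹' Metric.ball ((f : C(X,ℂ)) x) 1 := by
    intro x
    obtain ⟨U, hU, hxU, hsub⟩ := hbasis.exists_subset_of_mem_open
      (show x ∈ (f : C(X,ℂ)) ⁻¹' Metric.ball ((f : C(X,ℂ)) x) 1 by
        simp [Metric.mem_ball])
      ((f : C(X,ℂ)).continuous.isOpen_preimage _ Metric.isOpen_ball)
    exact ⟨U, hU, hxU, hsub⟩
  choose U hUclopen hxU hUsub using hO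
  obtain ⟨t, ht⟩ := isCompact_univ.elim_finite_subcover U
    (fun x => (hUclopen x).isOpen) (fun z _ => Set.mem_iUnion.2 ⟨z, hxU z⟩)
  set N := t.card with hN
  set σ := t.equivFin with hσ
  set Uf : Fin N → Set X := fun i => U ((σ.symm i : t) : X) with hUf
  set c : Fin N → ℂ := fun i => (f : C(X,ℂ)) ((σ.symm i : t) : X) with hc
  have hcabs : ∀ i, ‖c i‖ = 1 := fun i => unitary_apply_norm f _
  have hUfclopen : ∀ i, IsClopen (Uf i) := fun i => hUclopen _
  have hclose : ∀ i, ∀ z ∈ Uf i, ‖(f : C(X,ℂ)) z - c i‖ < 1 := by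
    intro i z hz
    have := hUsub _ hz
    simpa [Metric.mem_ball, dist_eq_norm] using this
  have hcover : ∀ z : X, ∃ i, z ∈ Uf i := by
    intro z
    obtain ⟨w, hw⟩ := Set.mem_iUnion.1 (ht (Set.mem_univ z))
    obtain ⟨hwt, hzw⟩ := Set.mem_iUnion.1 hw
    exact ⟨σ ⟨w, hwt⟩, by simpa [hUf] using hzw⟩
  set W : Fin N → Set X := fun i => Uf i \ ⋃ j, ⋃ (_ : j < i), Uf j with hW
  have hWclopen : ∀ i, IsClopen (W i) := by
    intro i
    refine (hUfclopen i).diff (isClopen_iUnion_of_finite fun j => ?_)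
    by_cases hj : j < i
    · simpa [hj] using hUfclopen j
    · simp [hj, isClopen_empty]
  have hWcover : ∀ z : X, ∃ i, z ∈ W i := by
    intro z
    have hne : (Finset.univ.filter (fun i => z ∈ Uf i)).Nonempty := by
      obtain ⟨i, hi⟩ := hcover z
      exact ⟨i, by simp [hi]⟩
    set i₀ := (Finset.univ.filter (fun i => z ∈ Uf i)).min' hne with hi₀
    have hi₀mem := (Finset.univ.filter (fun i => z ∈ Uf i)).min'_mem hne
    rw [Finset.mem_filter] at hi₀mem
    refine ⟨i₀, hi₀mem.2, ?_⟩
    intro hmem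
    obtain ⟨j, hj⟩ := Set.mem_iUnion.1 hmem
    obtain ⟨hji, hzj⟩ := Set.mem_iUnion.1 hj
    have : i₀ ≤ j := Finset.min'_le _ _ (by simp [hzj])
    exact absurd hji (not_lt.2 this)
  have hWdisj : ∀ z : X, ∀ i j, z ∈ W i → z ∈ W j → i = j := by
    intro z i j hi hj
    by_contra hne
    rcases lt_or_gt_of_ne hne with hlt | hlt
    · exact hj.2 (Set.mem_iUnion.2 ⟨i, Set.mem_iUnion.2 ⟨hlt, hi.1⟩⟩)
    · exact hi.2 (Set.mem_iUnion.2 ⟨j, Set.mem_iUnion.2 ⟨hlt, hj.1⟩⟩)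
  set branch : Fin N → X → ℝ :=
    fun i z => Complex.arg ((f : C(X,ℂ)) z * (starRingEnd ℂ) (c i)) + Complex.arg (c i)
    with hbranch
  have hre : ∀ i, ∀ z ∈ Uf i, 0 < ((f : C(X,ℂ)) z * (starRingEnd ℂ) (c i)).re := by
    intro i z hz
    apply re_pos_of_close
    have h1 : (f : C(X,ℂ)) z * (starRingEnd ℂ) (c i) - 1
        = ((f : C(X,ℂ)) z - c i) * (starRingEnd ℂ) (c i) := by
      have : c i * (starRingEnd ℂ) (c i) = 1 := by
        rw [Complex.mul_conj]
        norm_cast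
        rw [Complex.normSq_eq_norm_sq, hcabs i]; norm_num
      rw [sub_mul, this]
    rw [h1, norm_mul, Complex.norm_conj, hcabs i, mul_one]
    exact hclose i z hz
  have hbranchcont : ∀ i, ContinuousOn (branch i) (W i) := by
    intro i
    apply ContinuousOn.add ?_ continuousOn_const
    intro z hz
    apply ContinuousAt.continuousWithinAt
    have hmul : ContinuousAt (fun w : X => (f : C(X,ℂ)) w * (starRingEnd ℂ) (c i)) z :=
      ((f : C(X,ℂ)).continuous.mul continuous_const).continuousAt
    exact ContinuousAt.comp (g := Complex.arg)
      (Complex.continuousAt_arg (Or.inl (hre i z hz.1))) hmul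
  set g0 : X → ℝ := fun z => ∑ i, (W i).indicator (branch i) z with hg0
  have hg0cont : Continuous g0 := by
    apply continuous_finset_sum
    intro i _
    exact indicator_continuous_of_clopen (hWclopen i) (hbranchcont i)
  have hg0val : ∀ z : X, ∃ i, z ∈ W i ∧ g0 z = branch i z := by
    intro z
    obtain ⟨i, hi⟩ := hWcover z
    refine ⟨i, hi, ?_⟩
    simp only [hg0]
    rw [Finset.sum_eq_single i]
    · exact Set.indicator_of_mem hi _
    · intro j _ hj
      exact Set.indicator_of_notMem (fun hmem => hj (hWdisj z j i hmem hi)) _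
    · intro hmem
      exact absurd (Finset.mem_univ i) hmem
  refine ⟨⟨g0, hg0cont⟩, ?_, ?_⟩
  · intro z
    obtain ⟨i, hiW, hval⟩ := hg0val z
    rw [ContinuousMap.coe_mk, hval]
    have h1 : |Complex.arg ((f : C(X,ℂ)) z * (starRingEnd ℂ) (c i))| ≤ π/2 :=
      Complex.abs_arg_le_pi_div_two_iff.2 (le_of_lt (hre i z hiW.1))
    have h2 := Complex.abs_arg_le_pi (c i)
    have hπ := Real.pi_pos
    calc |branch i z| ≤ |Complex.arg ((f : C(X,ℂ)) z * (starRingEnd ℂ) (c i))|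
          + |Complex.arg (c i)| := abs_add_le _ _
      _ ≤ π/2 + π := add_le_add h1 h2
      _ ≤ 2*π := by linarith
  · intro z
    obtain ⟨i, hiW, hval⟩ := hg0val z
    rw [ContinuousMap.coe_mk, hval, hbranch]
    have habsw : ‖(f : C(X,ℂ)) z * (starRingEnd ℂ) (c i)‖ = 1 := by
      rw [norm_mul, Complex.norm_conj, hcabs i, unitary_apply_norm f z, mul_one]
    have h1 : Complex.exp ((Complex.arg ((f : C(X,ℂ)) z * (starRingEnd ℂ) (c i)) : ℝ) * Complex.I)
        = (f : C(X,ℂ)) z * (starRingEnd ℂ) (c i) := by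
      have := Complex.norm_mul_exp_arg_mul_I ((f : C(X,ℂ)) z * (starRingEnd ℂ) (c i))
      rwa [habsw, Complex.ofReal_one, one_mul] at this
    have h2 : Complex.exp ((Complex.arg (c i) : ℝ) * Complex.I) = c i := by
      have := Complex.norm_mul_exp_arg_mul_I (c i)
      rwa [hcabs i, Complex.ofReal_one, one_mul] at this
    have hconj : (starRingEnd ℂ) (c i) * c i = 1 := by
      rw [mul_comm, Complex.mul_conj]
      norm_cast
      rw [Complex.normSq_eq_norm_sq, hcabs i]; norm_num
    push_cast
    rw [add_mul, Complex.exp_add, h1, h2, mul_assoc, hconj, mul_one]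

open Real in
lemma reverse_dir [TotallyDisconnectedSpace X] :
    IsBoundedTopologicalGroup (unitary C(X,ℂ)) := by
  intro V hV
  obtain ⟨ε, hε, hball⟩ := Metric.mem_nhds_iff.1 hV
  set n : ℕ := ⌈(4*π)/ε⌉₊ + 7 with hn
  have hπ := Real.pi_pos
  have hn0 : (0:ℝ) < n := by positivity
  have hn7 : (7:ℝ) ≤ n := by exact_mod_cast Nat.le_add_left 7 _
  have hnε : 4*π/ε < n := by
    calc 4*π/ε ≤ ⌈(4*π)/ε⌉₊ := Nat.le_ceil _
      _ < n := by exact_mod_cast Nat.lt_add_of_pos_right (by norm_num)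
  have h4π : 4*π < ε * n := by
    rw [div_lt_iff₀ hε] at hnε
    linarith
  refine ⟨n, {1}, Set.finite_singleton _, ?_⟩
  rw [Set.eq_univ_iff_forall]
  intro f
  obtain ⟨g, hgb, hge⟩ := exists_log f
  set u := expU ((n:ℝ)⁻¹ • g) with hu
  have hupow : u ^ n = f := by
    rw [hu, expU_pow]
    have : (n : ℕ) • ((n:ℝ)⁻¹ • g) = g := by
      rw [← Nat.cast_smul_eq_nsmul ℝ, smul_smul, mul_inv_cancel₀ (ne_of_gt hn0), one_smul]
    rw [this]
    ext z
    exact hge z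
  have humem : u ∈ V := by
    apply hball
    rw [Metric.mem_ball]
    have h1 : dist (u : C(X,ℂ)) ((1 : unitary C(X,ℂ)) : C(X,ℂ)) < ε := by
      have hcoe : ((1 : unitary C(X,ℂ)) : C(X,ℂ)) = 1 := rfl
      rw [hcoe, dist_eq_norm]
      rw [ContinuousMap.norm_lt_iff _ hε]
      intro z
      have hz : ((u : C(X,ℂ)) - 1) z = Complex.exp (((n:ℝ)⁻¹ * g z : ℝ) * Complex.I) - 1 := by
        simp only [ContinuousMap.sub_apply, ContinuousMap.one_apply, hu, expU_apply,
          ContinuousMap.smul_apply, smul_eq_mul]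
      rw [hz]
      have habs : ‖((n:ℝ)⁻¹ * g z : ℝ) * Complex.I‖ = |(n:ℝ)⁻¹ * g z| := by
        rw [norm_mul, Complex.norm_I, mul_one, Complex.norm_real, Real.norm_eq_abs]
      have hb : |(n:ℝ)⁻¹ * g z| ≤ 2*π/n := by
        rw [abs_mul, abs_inv, Nat.abs_cast]
        rw [div_eq_inv_mul]
        exact mul_le_mul_of_nonneg_left (hgb z) (by positivity)
      have hb1 : |(n:ℝ)⁻¹ * g z| ≤ 1 := by
        refine hb.trans ?_
        rw [div_le_one hn0]
        nlinarith [Real.pi_lt_d2]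
      have := Complex.norm_exp_sub_one_le (x := ((n:ℝ)⁻¹ * g z : ℝ) * Complex.I)
        (by rw [habs]; exact hb1)
      rw [habs] at this
      calc ‖Complex.exp (((n:ℝ)⁻¹ * g z : ℝ) * Complex.I) - 1‖
          ≤ 2 * |(n:ℝ)⁻¹ * g z| := this
        _ ≤ 2 * (2*π/n) := by linarith
        _ = 4*π/n := by ring
        _ < ε := by rw [div_lt_iff₀ hn0]; linarith [h4π]
    rw [Subtype.dist_eq]
    exact h1
  have : f = u ^ n * 1 := by rw [mul_one, hupow]
  rw [this]
  exact Set.mul_mem_mul (Set.pow_mem_pow humem) rfl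


end Helpers

/-- For a compact Hausdorff space `X`, the unitary group of `C(X, ℂ)` with the supremum-norm
topology is bounded if and only if `X` is totally disconnected. -/
theorem stmt12 (X : Type u) [TopologicalSpace X] [CompactSpace X] [T2Space X] :
    IsBoundedTopologicalGroup (unitary C(X, ℂ)) ↔ TotallyDisconnectedSpace X := by
  constructor
  · exact forward_dir
  · intro h
    exact reverse_dir (X := X)
end
end

section
/- Let A be a unital C*-algebra. Then the unitary group of A with the norm topology is a locally connected topological space. Consequently, the unitary group of A with the norm topology is bounded if and only if it has finitely many connected components and its identity component (with the subspace topology) is a bounded topological group. -/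
open Topology Pointwise

universe u

noncomputable section

section Abstract
variable {G : Type*} [Group G] [TopologicalSpace G] [IsTopologicalGroup G]

lemma connComp_eq_mulRight (y : G) :
    connectedComponent y = (· * y) '' connectedComponent 1 := by
  apply Set.Subset.antisymm
  · have := (Homeomorph.mulRight y⁻¹).continuous.image_connectedComponent_subset y
    intro x hx
    have hx' : x * y⁻¹ ∈ connectedComponent (y * y⁻¹) := this ⟨x, hx, rfl⟩
    simp only [mul_inv_cancel] at hx'
    exact ⟨x * y⁻¹, hx', by simp⟩
  · have := (Homeomorph.mulRight y).continuous.image_connectedComponent_subset 1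
    simpa using this

omit [TopologicalSpace G] [IsTopologicalGroup G] in
lemma pow_subset_subgroup {H : Subgroup G} {S : Set G} (hS : S ⊆ H) (n : ℕ) :
    S ^ n ⊆ (H : Set G) := by
  induction n with
  | zero => simpa [pow_zero, Set.one_subset] using H.one_mem
  | succ n ih =>
    rw [pow_succ]
    rintro x ⟨a, ha, b, hb, rfl⟩
    exact H.mul_mem (ih ha) (hS hb)

omit [TopologicalSpace G] [IsTopologicalGroup G] in
lemma lift_mem_pow {H : Subgroup G} {S : Set G} (hS : S ⊆ H) {n : ℕ} {w : G}
    (hw : w ∈ S ^ n) :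
    ∃ w' : H, (w' : G) = w ∧ w' ∈ ((Subtype.val ⁻¹' S : Set H)) ^ n := by
  have key : Subtype.val '' ((Subtype.val ⁻¹' S : Set H) ^ n) = S ^ n := by
    have h1 := Set.image_pow H.subtype (Subtype.val ⁻¹' S : Set H) n
    simp only [Subgroup.coe_subtype] at h1
    have h2 : (fun a : H => (a : G)) '' (Subtype.val ⁻¹' S) = S :=
      Set.ext fun z => ⟨fun ⟨a, ha, hz⟩ => hz ▸ ha, fun hz => ⟨⟨z, hS hz⟩, hz, rfl⟩⟩
    rw [h2] at h1
    exact h1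
  rw [← key] at hw
  obtain ⟨w', hw', hww⟩ := hw
  exact ⟨w', hww, hw'⟩

lemma abstract_bounded_iff (G : Type*) [Group G] [TopologicalSpace G] [IsTopologicalGroup G]
    [LocallyConnectedSpace G] :
    IsBoundedTopologicalGroup G ↔
      Finite (ConnectedComponents G) ∧
        IsBoundedTopologicalGroup (Subgroup.connectedComponentOfOne G) := by
  set G₀ : Subgroup G := Subgroup.connectedComponentOfOne G with hG₀
  have hG₀carrier : (G₀ : Set G) = connectedComponent (1 : G) := rfl
  have hopen : IsOpen (G₀ : Set G) := by rw [hG₀carrier]; exact isOpen_connectedComponent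
  constructor
  · intro hb
    constructor
    · obtain ⟨n, F, hF, hFeq⟩ := hb (G₀ : Set G) (hopen.mem_nhds G₀.one_mem)
      haveI : Finite F := hF.to_subtype
      apply Finite.of_surjective (fun f : F => ((f : G) : ConnectedComponents G))
      intro c
      obtain ⟨x, rfl⟩ := ConnectedComponents.surjective_coe c
      have hx : x ∈ (G₀ : Set G) ^ n * F := by rw [hFeq]; trivial
      obtain ⟨g, hg, f, hf, rfl⟩ := hx
      refine ⟨⟨f, hf⟩, ?_⟩
      show (f : ConnectedComponents G) = ↑(g * f)
      symm
      rw [ConnectedComponents.coe_eq_coe', connComp_eq_mulRight f]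
      exact ⟨g, pow_subset_subgroup (fun a ha => ha) n hg, rfl⟩
    · intro V hV
      rw [nhds_subtype] at hV
      obtain ⟨W, hW, hWV⟩ := Filter.mem_comap.mp hV
      have hW' : W ∩ G₀ ∈ 𝓝 (1 : G) := Filter.inter_mem hW (hopen.mem_nhds G₀.one_mem)
      obtain ⟨n, F, hF, hFeq⟩ := hb _ hW'
      refine ⟨n, Subtype.val ⁻¹' F, hF.preimage Subtype.val_injective.injOn, ?_⟩
      rw [Set.eq_univ_iff_forall]
      intro x
      have hx : (x : G) ∈ (W ∩ G₀) ^ n * F := by rw [hFeq]; trivial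
      obtain ⟨w, hw, f, hf, hxeq⟩ := hx
      have hwG₀ : w ∈ (G₀ : Set G) := pow_subset_subgroup Set.inter_subset_right n hw
      have hfG₀ : f ∈ G₀ := by
        have hfx : f = w⁻¹ * (x : G) := by rw [← hxeq]; group
        rw [hfx]; exact G₀.mul_mem (G₀.inv_mem hwG₀) x.2
      obtain ⟨w', hw'val, hw'mem⟩ := lift_mem_pow Set.inter_subset_right hw
      have hw'V : w' ∈ (V : Set G₀) ^ n :=
        Set.pow_subset_pow_left (fun a ha => hWV (Set.mem_preimage.mpr ha.1)) hw'mem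
      exact ⟨w', hw'V, ⟨f, hfG₀⟩, hf, Subtype.ext (by rw [← hxeq, ← hw'val]; rfl)⟩
  · rintro ⟨hfin, hb⟩
    intro V hV
    have hV₀ : (Subtype.val ⁻¹' V : Set G₀) ∈ 𝓝 (1 : G₀) := by
      rw [nhds_subtype]; exact Filter.preimage_mem_comap hV
    obtain ⟨n, F₀, hF₀, hF₀eq⟩ := hb _ hV₀
    set R : Set G := Set.range (fun c : ConnectedComponents G => Quotient.out c) with hR
    refine ⟨n, (Subtype.val '' F₀) * R, ((hF₀.image _).mul (Set.finite_range _)), ?_⟩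
    rw [Set.eq_univ_iff_forall]
    intro x
    set y : G := Quotient.out ((x : ConnectedComponents G)) with hy
    have hyc : (y : ConnectedComponents G) = (x : ConnectedComponents G) := Quotient.out_eq' _
    have hxy : x ∈ connectedComponent y := by
      rw [← ConnectedComponents.coe_eq_coe']; exact hyc.symm
    rw [connComp_eq_mulRight y] at hxy
    obtain ⟨g, hg, hgx⟩ := hxy
    have hgG₀ : g ∈ G₀ := hg
    have hdecomp : (⟨g, hgG₀⟩ : G₀) ∈ (Subtype.val ⁻¹' V : Set G₀) ^ n * F₀ := by
      rw [hF₀eq]; trivial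
    obtain ⟨v, hv, f₀, hf₀, hvf⟩ := hdecomp
    have hvV : (v : G) ∈ V ^ n := by
      have h1 := Set.image_pow G₀.subtype (Subtype.val ⁻¹' V : Set G₀) n
      simp only [Subgroup.coe_subtype] at h1
      have : (v : G) ∈ Subtype.val '' ((Subtype.val ⁻¹' V : Set G₀) ^ n) :=
        ⟨v, hv, rfl⟩
      rw [h1] at this
      exact Set.pow_subset_pow_left (Set.image_preimage_subset _ _) this
    refine ⟨(v : G), hvV, (f₀ : G) * y, Set.mul_mem_mul ⟨f₀, hf₀, rfl⟩ ⟨_, rfl⟩, ?_⟩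
    have : (v : G) * (f₀ : G) = g := congrArg Subtype.val hvf
    show (v : G) * ((f₀ : G) * y) = x
    rw [← mul_assoc, this]
    exact hgx

end Abstract

variable {A : Type u} [NormedRing A] [StarRing A] [CStarRing A]
    [NormedAlgebra ℂ A] [CompleteSpace A] [StarModule ℂ A]

instance : IsTopologicalGroup (unitary A) where
  continuous_mul := by
    apply Continuous.subtype_mk
    exact (continuous_subtype_val.comp continuous_fst).mul
      (continuous_subtype_val.comp continuous_snd)
  continuous_inv := by
    apply Continuous.subtype_mk
    exact continuous_star.comp continuous_subtype_val


-- trig inequality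
lemma trig_ineq {t θ : ℝ} (ht0 : 0 ≤ t) (ht1 : t ≤ 1) (hθ : |θ| ≤ Real.pi) :
    ‖Complex.exp ((t * θ : ℝ) * Complex.I) - 1‖ ≤
      ‖Complex.exp ((θ : ℝ) * Complex.I) - 1‖ := by
  have habs2 : ∀ φ : ℝ, (‖Complex.exp ((φ : ℝ) * Complex.I) - 1‖) ^ 2
      = 2 - 2 * Real.cos φ := by
    intro φ
    rw [Complex.sq_norm, Complex.exp_mul_I, Complex.normSq_apply]
    simp only [Complex.add_re, Complex.sub_re, Complex.mul_re, Complex.add_im, Complex.sub_im,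
      Complex.mul_im, Complex.I_re, Complex.I_im, Complex.one_re, Complex.one_im,
      Complex.cos_ofReal_re, Complex.cos_ofReal_im, Complex.sin_ofReal_re, Complex.sin_ofReal_im]
    nlinarith [Real.sin_sq_add_cos_sq φ]
  have hcos : Real.cos θ ≤ Real.cos (t * θ) := by
    rw [← Real.cos_abs θ, ← Real.cos_abs (t * θ)]
    apply Real.cos_le_cos_of_nonneg_of_le_pi (abs_nonneg _) hθ
    rw [abs_mul, abs_of_nonneg ht0]
    calc t * |θ| ≤ 1 * |θ| := by nlinarith [abs_nonneg θ]
    _ = |θ| := one_mul _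
  apply le_of_pow_le_pow_left₀ two_ne_zero (norm_nonneg _)
  rw [habs2, habs2]
  linarith

section PathPart
variable [Nontrivial A]

lemma unitary_path (u : unitary A) (hu2 : ‖(u : A) - 1‖ < 2) :
    ∃ γ : Path (1 : unitary A) u, ∀ t : unitInterval, ‖((γ t : unitary A) : A) - 1‖ ≤ ‖(u : A) - 1‖ := by
  letI : CStarAlgebra A := { }
  have hnu : IsStarNormal (u : A) := isStarNormal_of_mem_unitary u.2
  have hspec := spectrum_subset_unitary_of_mem_unitary (u.2 : (u : A) ∈ unitary A)
  have habs : ∀ z ∈ spectrum ℂ (u : A), ‖z‖ = 1 := by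
    intro z hz
    simpa using CStarRing.norm_of_mem_unitary (hspec hz)
  have hdist : ∀ z ∈ spectrum ℂ (u : A), ‖z - 1‖ ≤ ‖(u : A) - 1‖ := by
    intro z hz
    have h1 : z - 1 ∈ spectrum ℂ ((u : A) - algebraMap ℂ A 1) := by
      rw [← spectrum.sub_singleton_eq]
      exact Set.sub_mem_sub hz rfl
    have h2 := spectrum.norm_le_norm_of_mem h1
    simpa using h2
  have hslit : ∀ z ∈ spectrum ℂ (u : A), z ∈ Complex.slitPlane := by
    intro z hz
    rw [Complex.mem_slitPlane_iff]
    by_contra h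
    simp only [not_or, not_lt, not_ne_iff] at h
    have hz1 : ‖z‖ = 1 := habs z hz
    have hzre : z = (z.re : ℂ) := Complex.ext rfl (by simp [h.2])
    have habs1 : |z.re| = 1 := by rw [hzre] at hz1; simpa using hz1
    have hzre' : z.re = -1 := by
      rcases abs_cases z.re with hc | hc
      · linarith [hc.1, h.1]
      · linarith [hc.1]
    have hzm : z = -1 := by rw [hzre, hzre']; norm_num
    subst hzm
    have hd := hdist (-1) hz
    norm_num at hd
    linarith
  set f : ℝ → ℂ → ℂ := fun t z => Complex.exp (((t * Complex.arg z : ℝ) : ℂ) * Complex.I) with hf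
  have hargcont : ContinuousOn (fun z : ℂ => Complex.arg z) (spectrum ℂ (u : A)) :=
    fun z hz => (Complex.continuousAt_arg (hslit z hz)).continuousWithinAt
  have hcont : ∀ t : ℝ, ContinuousOn (f t) (spectrum ℂ (u : A)) := by
    intro t
    apply Complex.continuous_exp.comp_continuousOn
    apply ContinuousOn.mul ?_ continuousOn_const
    exact Complex.continuous_ofReal.comp_continuousOn ((continuousOn_const.mul hargcont))
  -- unitarity
  have hmem : ∀ t : ℝ, cfc (f t) (u : A) ∈ unitary A := by
    intro t
    rw [cfc_unitary_iff (f t) (u : A) hnu (hcont t)]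
    intro x hx
    simp only [hf, RCLike.star_def]
    rw [← Complex.exp_conj]
    rw [← Complex.exp_add]
    simp
  -- the continuous-map-valued family
  set g : ℝ → C(spectrum ℂ (u : A), ℂ) :=
    fun t => ⟨(spectrum ℂ (u : A)).restrict (f t), (hcont t).restrict⟩ with hg
  have hcfc_eq : ∀ t, cfc (f t) (u : A) = cfcHom hnu (g t) :=
    fun t => cfc_apply (f t) (u : A) hnu (hcont t)
  have hargres : Continuous (fun z : spectrum ℂ (u : A) => Complex.arg ↑z) :=
    hargcont.restrict
  have hgcont : Continuous g := by
    apply ContinuousMap.continuous_of_continuous_uncurry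
    apply Complex.continuous_exp.comp
    apply Continuous.mul ?_ continuous_const
    apply Complex.continuous_ofReal.comp
    exact continuous_fst.mul (hargres.comp continuous_snd)
  have hmap : Continuous (fun t : ℝ => (⟨cfc (f t) (u : A), hmem t⟩ : unitary A)) := by
    apply Continuous.subtype_mk
    have heq : (fun t : ℝ => cfc (f t) (u : A)) = fun t => cfcHom hnu (g t) :=
      funext hcfc_eq
    rw [heq]
    exact (cfcHom_isClosedEmbedding hnu).continuous.comp hgcont
  have h0 : (⟨cfc (f 0) (u : A), hmem 0⟩ : unitary A) = 1 := by
    apply Subtype.ext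
    show cfc (f 0) (u : A) = 1
    calc cfc (f 0) (u : A) = cfc (1 : ℂ → ℂ) (u : A) :=
          cfc_congr (fun z hz => by simp [hf])
      _ = 1 := cfc_one ℂ (u : A)
  have h1 : (⟨cfc (f 1) (u : A), hmem 1⟩ : unitary A) = u := by
    apply Subtype.ext
    show cfc (f 1) (u : A) = (u : A)
    calc cfc (f 1) (u : A) = cfc (id : ℂ → ℂ) (u : A) := by
          apply cfc_congr
          intro z hz
          simp only [hf, one_mul, id_eq]
          have hz1 := Complex.norm_mul_exp_arg_mul_I z
          rw [habs z hz] at hz1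
          simpa using hz1
      _ = (u : A) := cfc_id ℂ (u : A)
  refine ⟨{ toFun := fun t => ⟨cfc (f (t : ℝ)) (u : A), hmem _⟩
            continuous_toFun := hmap.comp continuous_subtype_val
            source' := h0
            target' := h1 }, ?_⟩
  intro t
  show ‖cfc (f (t : ℝ)) (u : A) - 1‖ ≤ ‖(u : A) - 1‖
  have hsub : cfc (fun z => f (t : ℝ) z - 1) (u : A) = cfc (f (t : ℝ)) (u : A) - 1 := by
    have hh := cfc_sub (f (t : ℝ)) (fun _ => (1 : ℂ)) (u : A) (hcont _) continuousOn_const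
    rw [hh, cfc_const (1 : ℂ) (u : A) hnu, map_one]
  rw [← hsub]
  apply norm_cfc_le (norm_nonneg _)
  intro z hz
  have harg : |Complex.arg z| ≤ Real.pi := Complex.abs_arg_le_pi z
  have hz1 := Complex.norm_mul_exp_arg_mul_I z
  rw [habs z hz, Complex.ofReal_one, one_mul] at hz1
  calc ‖f (t : ℝ) z - 1‖
      = ‖Complex.exp (((t : ℝ) * Complex.arg z : ℝ) * Complex.I) - 1‖ := rfl
    _ ≤ ‖Complex.exp ((Complex.arg z : ℝ) * Complex.I) - 1‖ :=
        trig_ineq t.2.1 t.2.2 harg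
    _ = ‖z - 1‖ := by rw [hz1]
    _ ≤ ‖(u : A) - 1‖ := hdist z hz

lemma unitary_ball_preconnected (r : ℝ) (hr0 : 0 < r) (hr2 : r ≤ 2) :
    IsPreconnected {v : unitary A | ‖(v : A) - 1‖ < r} := by
  apply IsPathConnected.isConnected (⟨1, ?_, ?_⟩) |>.isPreconnected
  · show ‖((1 : unitary A) : A) - 1‖ < r
    simpa using hr0
  · intro v hv
    obtain ⟨γ, hγ⟩ := unitary_path v (lt_of_lt_of_le hv hr2)
    exact ⟨γ, fun t => lt_of_le_of_lt (hγ t) hv⟩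

end PathPart

lemma unitary_locallyConnected : LocallyConnectedSpace (unitary A) := by
  rcases subsingleton_or_nontrivial A with hA | hA
  · haveI : Subsingleton (unitary A) := ⟨fun a b => Subtype.ext (Subsingleton.elim _ _)⟩
    rw [locallyConnectedSpace_iff_connected_subsets]
    intro x U hU
    refine ⟨{x}, ?_, isPreconnected_singleton, Set.singleton_subset_iff.mpr (mem_of_mem_nhds hU)⟩
    have : ({x} : Set (unitary A)) = Set.univ :=
      Set.eq_univ_of_forall fun y => by simp [Subsingleton.elim y x]
    rw [this]; exact Filter.univ_mem
  · rw [locallyConnectedSpace_iff_connected_subsets]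
    intro x U hU
    set h := Homeomorph.mulLeft x with hh
    have hU' : (⇑h) ⁻¹' U ∈ 𝓝 (1 : unitary A) := by
      apply h.continuous.continuousAt.preimage_mem_nhds
      have hx1 : h 1 = x := by rw [hh]; simp
      rw [hx1]; exact hU
    obtain ⟨ε, hε, hsub⟩ := Metric.mem_nhds_iff.mp hU'
    set r := min ε 2 with hr
    have hr0 : 0 < r := lt_min hε (by norm_num)
    have hB : {v : unitary A | ‖(v : A) - 1‖ < r} ⊆ (⇑h) ⁻¹' U := by
      intro v hv
      apply hsub
      rw [Metric.mem_ball, Subtype.dist_eq, dist_eq_norm]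
      exact lt_of_lt_of_le hv (min_le_left _ _)
    have hopen : IsOpen {v : unitary A | ‖(v : A) - 1‖ < r} := by
      have : {v : unitary A | ‖(v : A) - 1‖ < r}
          = Subtype.val ⁻¹' Metric.ball (1 : A) r := by
        ext v; simp [Metric.mem_ball, dist_eq_norm]
      rw [this]
      exact Metric.isOpen_ball.preimage continuous_subtype_val
    refine ⟨h '' {v : unitary A | ‖(v : A) - 1‖ < r}, ?_, ?_, ?_⟩
    · apply (h.isOpenMap _ hopen).mem_nhds
      refine ⟨1, by simpa using hr0, ?_⟩
      rw [hh]; simp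
    · exact (unitary_ball_preconnected r hr0 (min_le_right _ _)).image _ h.continuous.continuousOn
    · exact Set.image_subset_iff.mpr hB


/-- The unitary group of a unital C*-algebra with the norm topology is locally connected;
consequently, it is bounded if and only if it has finitely many connected components and its
identity component is bounded. -/
theorem stmt13 (A : Type u) [NormedRing A] [StarRing A] [CStarRing A]
    [NormedAlgebra ℂ A] [CompleteSpace A] [StarModule ℂ A] :
    LocallyConnectedSpace (unitary A) ∧
      (IsBoundedTopologicalGroup (unitary A) ↔
        Finite (ConnectedComponents (unitary A)) ∧
          IsBoundedTopologicalGroup (Subgroup.connectedComponentOfOne (unitary A))) := by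
  haveI hlc : LocallyConnectedSpace (unitary A) := unitary_locallyConnected
  exact ⟨hlc, abstract_bounded_iff (unitary A)⟩
end
end

section
/- Let A be a unital C*-algebra that is infinite-dimensional as a complex vector space, and let B be a maximal abelian star-subalgebra of A, i.e., a commutative star-subalgebra of A that is maximal with respect to inclusion among commutative star-subalgebras of A. Then B is infinite-dimensional as a complex vector space. -/
open Polynomial

universe u

variable {A : Type u} [NormedRing A] [StarRing A] [CStarRing A]
    [NormedAlgebra ℂ A] [CompleteSpace A] [StarModule ℂ A]

private lemma st16_sa_eq_zero {a : A} (ha : IsSelfAdjoint a)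
    (h : spectrum ℂ a ⊆ {0}) : a = 0 := by
  letI : CStarAlgebra A := {}
  have h1 : spectralRadius ℂ a = 0 := by
    rw [spectralRadius]
    refine le_antisymm (iSup₂_le fun k hk => ?_) zero_le
    have : k = (0 : ℂ) := h hk
    simp [this]
  have h2 := ha.spectralRadius_eq_nnnorm
  rw [h1] at h2
  have h3 : ‖a‖₊ = 0 := by exact_mod_cast h2.symm
  simpa using h3

private lemma st16_dvd_of_roots (T : Finset ℝ) (p : ℝ[X]) (h : ∀ t ∈ T, p.eval t = 0) :
    (∏ t ∈ T, (X - C t)) ∣ p := by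
  classical
  induction T using Finset.induction_on generalizing p with
  | empty => simpa using one_dvd p
  | insert a T ha ih =>
    have hroot : IsRoot p a := h a (Finset.mem_insert_self a T)
    obtain ⟨q, hq⟩ := (dvd_iff_isRoot.mpr hroot)
    have hqroots : ∀ t ∈ T, q.eval t = 0 := by
      intro t ht
      have hh := h t (Finset.mem_insert_of_mem ht)
      rw [hq, eval_mul, eval_sub, eval_X, eval_C] at hh
      have hta : t - a ≠ 0 := sub_ne_zero.mpr (by rintro rfl; exact ha ht)
      exact (mul_eq_zero.mp hh).resolve_left hta
    rw [Finset.prod_insert ha, hq]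
    exact mul_dvd_mul_left _ (ih q hqroots)

private lemma st16_aeval_sa {b : A} (hb : IsSelfAdjoint b) (p : ℝ[X]) :
    IsSelfAdjoint (aeval b p) := by
  induction p using Polynomial.induction_on' with
  | add p q hp hq => simpa [map_add] using hp.add hq
  | monomial n a =>
    rw [aeval_monomial]
    have h1 : IsSelfAdjoint (algebraMap ℝ A a) := by
      rw [IsSelfAdjoint, Algebra.algebraMap_eq_smul_one, star_smul, star_trivial, star_one]
    have h2 : IsSelfAdjoint (b ^ n) := hb.pow n
    rw [IsSelfAdjoint, star_mul, h1.star_eq, h2.star_eq]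
    exact (Algebra.commutes a (b ^ n)).symm

private lemma st16_spectrum_subset_roots {b : A} {P : ℂ[X]}
    (hPb : aeval b P = 0) : spectrum ℂ b ⊆ {z | P.IsRoot z} := by
  intro z hz
  by_contra hroot
  have hc : P.eval z ≠ 0 := hroot
  obtain ⟨Q, hQ⟩ := Polynomial.X_sub_C_dvd_sub_C_eval (a := z) (p := P)
  set c : ℂ := P.eval z with hcdef
  set w : A := aeval b Q with hwdef
  have e1 : (algebraMap ℂ A z - b) * w = algebraMap ℂ A c := by
    have h0 := congrArg (aeval b) hQ
    rw [map_sub, hPb, aeval_C, map_mul, map_sub, aeval_X, aeval_C, zero_sub] at h0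
    -- h0 : -(algebraMap ℂ A c) = (b - algebraMap ℂ A z) * w
    have := congrArg Neg.neg h0
    rw [neg_neg, ← neg_mul, neg_sub] at this
    exact this.symm
  have e2 : w * (algebraMap ℂ A z - b) = algebraMap ℂ A c := by
    have hz' : algebraMap ℂ A z - b = aeval b (C z - X) := by simp
    rw [hz', hwdef, ← map_mul, mul_comm Q (C z - X), map_mul, ← hz', e1]
  have hu : IsUnit (algebraMap ℂ A z - b) := by
    refine ⟨⟨algebraMap ℂ A z - b, c⁻¹ • w, ?_, ?_⟩, rfl⟩
    · rw [mul_smul_comm, e1, Algebra.smul_def, ← map_mul, inv_mul_cancel₀ hc, map_one]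
    · rw [smul_mul_assoc, e2, Algebra.smul_def, ← map_mul, inv_mul_cancel₀ hc, map_one]
  exact spectrum.mem_iff.mp hz hu

set_option linter.unusedSectionVars false
set_option maxHeartbeats 1000000

set_option linter.unusedSectionVars false

private lemma st16_masa (B : StarSubalgebra ℂ A)
    (hcomm : ∀ x ∈ B, ∀ y ∈ B, x * y = y * x)
    (hmax : ∀ C : StarSubalgebra ℂ A, (∀ x ∈ C, ∀ y ∈ C, x * y = y * x) → B ≤ C → B = C)
    {x : A} (hx : IsSelfAdjoint x) (hxc : ∀ b ∈ B, b * x = x * b) : x ∈ B := by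
  classical
  set s : Set A := (B : Set A) ∪ {x} with hs
  have hmemB : ∀ a ∈ s, a = x ∨ a ∈ B := by
    intro a ha
    rcases ha with h | h
    · exact Or.inr h
    · exact Or.inl h
  have hcomm2 : ∀ a ∈ s, ∀ b ∈ s, a * b = b * a := by
    intro a ha b hb
    rcases hmemB a ha with rfl | haB
    · rcases hmemB b hb with rfl | hbB
      · rfl
      · exact (hxc b hbB).symm
    · rcases hmemB b hb with rfl | hbB
      · exact hxc a haB
      · exact hcomm a haB b hbB
  have hstars : ∀ a ∈ s, star a ∈ s := by
    intro a ha
    rcases hmemB a ha with rfl | haB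
    · rw [hx.star_eq]; exact ha
    · exact Or.inl (star_mem haB)
  have hstar : ∀ a ∈ s, ∀ b ∈ s, a * star b = star b * a :=
    fun a ha b hb => hcomm2 a ha _ (hstars b hb)
  letI : CommSemiring ↥(StarAlgebra.adjoin ℂ s) :=
    StarAlgebra.adjoinCommSemiringOfComm ℂ hcomm2 hstar
  have hC : ∀ u ∈ StarAlgebra.adjoin ℂ s, ∀ v ∈ StarAlgebra.adjoin ℂ s, u * v = v * u := by
    intro u hu v hv
    exact congrArg Subtype.val (mul_comm (⟨u, hu⟩ : StarAlgebra.adjoin ℂ s) ⟨v, hv⟩)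
  have hBC : B ≤ StarAlgebra.adjoin ℂ s := fun b hb => StarAlgebra.subset_adjoin ℂ s (Or.inl hb)
  have hEq := hmax _ hC hBC
  rw [hEq]
  exact StarAlgebra.subset_adjoin ℂ s (Or.inr rfl)

private lemma st16_mem_of_commutes (B : StarSubalgebra ℂ A)
    (hcomm : ∀ x ∈ B, ∀ y ∈ B, x * y = y * x)
    (hmax : ∀ C : StarSubalgebra ℂ A, (∀ x ∈ C, ∀ y ∈ C, x * y = y * x) → B ≤ C → B = C)
    {x : A} (h1 : ∀ b ∈ B, b * x = x * b) (h2 : ∀ b ∈ B, b * star x = star x * b) : x ∈ B := by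
  have hh : IsSelfAdjoint (x + star x) := by
    rw [IsSelfAdjoint, star_add, star_star, add_comm]
  have hk : IsSelfAdjoint (Complex.I • (star x - x)) := by
    rw [IsSelfAdjoint, star_smul, star_sub, star_star, Complex.star_def, Complex.conj_I,
      neg_smul, ← smul_neg, neg_sub]
  have hhmem : (x + star x) ∈ B :=
    st16_masa B hcomm hmax hh (fun b hb => by rw [mul_add, add_mul, h1 b hb, h2 b hb])
  have hkmem : (Complex.I • (star x - x)) ∈ B := by
    refine st16_masa B hcomm hmax hk (fun b hb => ?_)
    rw [mul_smul_comm, smul_mul_assoc, mul_sub, sub_mul, h1 b hb, h2 b hb]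
  have hxeq : x = (2⁻¹ : ℂ) • ((x + star x) - (-Complex.I) • (Complex.I • (star x - x))) := by
    rw [smul_smul]
    have : (-Complex.I) * Complex.I = 1 := by
      rw [neg_mul, Complex.I_mul_I, neg_neg]
    rw [this, one_smul]
    have h2x : x + star x - (star x - x) = (2 : ℂ) • x := by
      rw [two_smul]; abel
    rw [h2x, smul_smul, inv_mul_cancel₀ (two_ne_zero), one_smul]
  rw [hxeq]
  exact SMulMemClass.smul_mem _ (sub_mem hhmem (SMulMemClass.smul_mem _ hkmem))

private lemma st16_vanish [Nontrivial A] {b : A} (hb : IsSelfAdjoint b) (g : ℝ[X])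
    (h0 : aeval b g = 0) : ∀ z ∈ spectrum ℂ b, g.eval z.re = 0 := by
  letI : CStarAlgebra A := {}
  intro z hz
  have hmap := spectrum.map_polynomial_aeval b (g.map (algebraMap ℝ ℂ))
  rw [Polynomial.aeval_map_algebraMap, h0, spectrum.zero_eq] at hmap
  have hmem : Polynomial.eval z (g.map (algebraMap ℝ ℂ)) ∈ ({0} : Set ℂ) := by
    rw [hmap]; exact ⟨z, hz, rfl⟩
  have hzre : z = ((z.re : ℝ) : ℂ) := hb.mem_spectrum_eq_re hz
  rw [hzre, Polynomial.eval_map] at hmem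
  have : (algebraMap ℝ ℂ) (g.eval z.re) = 0 := by
    have := Polynomial.eval₂_at_apply (algebraMap ℝ ℂ) (z.re) (p := g)
    simp only [Complex.coe_algebraMap] at this ⊢
    rw [← this]; exact hmem
  rw [Complex.coe_algebraMap] at this
  exact_mod_cast this

private lemma st16_split (B : StarSubalgebra ℂ A)
    (hcomm : ∀ x ∈ B, ∀ y ∈ B, x * y = y * x)
    [Nontrivial A] (hB : FiniteDimensional ℂ B)
    {e b' : A} (heB : e ∈ B) (hb'B : b' ∈ B)
    (hb'sa : IsSelfAdjoint b') (hb'e : b' * e = b') (heb' : e * b' = b')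
    (hb'ne : ¬ ∃ c : ℂ, b' = c • e) :
    ∃ p : A, p ∈ B ∧ IsSelfAdjoint p ∧ p * p = p ∧ p * e = p ∧ e * p = p ∧ p ≠ 0 ∧ p ≠ e := by
  classical
  letI : CStarAlgebra A := {}
  -- annihilating polynomial
  obtain ⟨P, hPmonic, hPeval⟩ : IsIntegral ℂ (⟨b', hb'B⟩ : B) := by
    haveI := hB
    exact Algebra.IsIntegral.isIntegral _
  have hPb : aeval b' P = 0 := by
    have h := Polynomial.aeval_algHom_apply (B.toSubalgebra.val) (⟨b', hb'B⟩ : B) P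
    rw [show aeval (⟨b', hb'B⟩ : B) P = 0 from hPeval] at h
    simpa using h
  have hsub := st16_spectrum_subset_roots hPb
  have hfin : (spectrum ℂ b').Finite :=
    Set.Finite.subset (Polynomial.finite_setOf_isRoot hPmonic.ne_zero) hsub
  have hreal : ∀ z ∈ spectrum ℂ b', z = ((z.re : ℝ) : ℂ) :=
    fun z hz => hb'sa.mem_spectrum_eq_re hz
  -- a nonzero spectral value
  obtain ⟨l, hlmem, hlne⟩ : ∃ l ∈ spectrum ℂ b', l ≠ 0 := by
    by_contra hcon
    push_neg at hcon
    refine hb'ne ⟨0, ?_⟩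
    rw [zero_smul]
    exact st16_sa_eq_zero hb'sa (fun z hz => hcon z hz)
  have hlre : l.re ≠ 0 := by
    intro h0
    apply hlne
    rw [hreal l hlmem, h0, Complex.ofReal_zero]
  -- node set
  set T : Finset ℝ := insert (0 : ℝ) (hfin.toFinset.image Complex.re) with hT
  have hmemT : ∀ z ∈ spectrum ℂ b', z.re ∈ T := by
    intro z hz
    exact Finset.mem_insert_of_mem (Finset.mem_image.mpr ⟨z, hfin.mem_toFinset.mpr hz, rfl⟩)
  have h0T : (0 : ℝ) ∈ T := Finset.mem_insert_self _ _
  -- nodal polynomial annihilates b'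
  set r : ℝ[X] := ∏ t ∈ T, (X - C t) with hr
  have hrb : aeval b' r = 0 := by
    refine st16_sa_eq_zero (st16_aeval_sa hb'sa r) ?_
    rw [← Polynomial.aeval_map_algebraMap ℂ b' r, spectrum.map_polynomial_aeval]
    rintro - ⟨z, hz, rfl⟩
    have hz0 : Polynomial.eval z (r.map (algebraMap ℝ ℂ)) = 0 := by
      rw [hr, Polynomial.map_prod, Polynomial.eval_prod]
      refine Finset.prod_eq_zero (hmemT z hz) ?_
      rw [Polynomial.map_sub, Polynomial.map_X, Polynomial.map_C, eval_sub, eval_X, eval_C,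
        Complex.coe_algebraMap]
      exact sub_eq_zero.mpr (hreal z hz)
    simp [hz0]
  -- interpolation polynomial
  set f : ℝ → ℝ := fun t => if t = l.re then 1 else 0 with hf
  set q : ℝ[X] := Lagrange.interpolate T id f with hq
  have hinj : Set.InjOn id (T : Set ℝ) := Function.injective_id.injOn
  have hqeval : ∀ t ∈ T, q.eval t = f t := by
    intro t ht
    have := Lagrange.eval_interpolate_at_node f hinj ht
    simpa [hq] using this
  set p : A := aeval b' q with hp
  have hpsa : IsSelfAdjoint p := st16_aeval_sa hb'sa q
  -- q has zero constant term
  have hq0 : q.eval 0 = 0 := by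
    rw [hqeval 0 h0T, hf]
    simp [Ne.symm hlre]
  obtain ⟨s', hs'⟩ : (X : ℝ[X]) ∣ q := by
    rw [X_dvd_iff, Polynomial.coeff_zero_eq_eval_zero, hq0]
  have hs'mem : aeval b' s' ∈ B := by
    have h1 : aeval b' s' ∈ Algebra.adjoin ℝ {b'} := Polynomial.aeval_mem_adjoin_singleton ℝ b'
    have h2 : Algebra.adjoin ℝ {b'} ≤ (B.toSubalgebra.restrictScalars ℝ) := by
      apply Algebra.adjoin_le
      intro y hy
      rw [Set.mem_singleton_iff] at hy
      subst hy
      exact hb'B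
    exact h2 h1
  have hpmem : p ∈ B := by
    rw [hp, hs', map_mul, aeval_X]
    exact mul_mem hb'B hs'mem
  have hpeq : p = b' * aeval b' s' := by rw [hp, hs', map_mul, aeval_X]
  have hpe : p * e = p := by
    rw [hpeq, mul_assoc, hcomm _ hs'mem _ heB, ← mul_assoc, hb'e]
  have hep : e * p = p := by
    rw [hpeq, ← mul_assoc, heb']
  -- idempotent
  have hpp : p * p = p := by
    have hqq : ∀ t ∈ T, (q * q - q).eval t = 0 := by
      intro t ht
      rw [eval_sub, eval_mul, hqeval t ht, hf]
      by_cases h : t = l.re <;> simp [h]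
    obtain ⟨w, hw⟩ := st16_dvd_of_roots T _ hqq
    have h0 : aeval b' (q * q - q) = 0 := by
      rw [hw, map_mul]
      rw [show aeval b' (∏ t ∈ T, (X - C t)) = 0 from hrb, zero_mul]
    rw [map_sub, map_mul] at h0
    have := sub_eq_zero.mp h0
    rw [← hp] at this
    exact this
  -- p ≠ 0
  have honemem : (1 : ℂ) ∈ spectrum ℂ p := by
    have hspec : spectrum ℂ p
        = (fun k => Polynomial.eval k (q.map (algebraMap ℝ ℂ))) '' spectrum ℂ b' := by
      rw [hp, ← Polynomial.aeval_map_algebraMap ℂ b' q, spectrum.map_polynomial_aeval]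
    rw [hspec]
    refine ⟨l, hlmem, ?_⟩
    have hl' : l = ((l.re : ℝ) : ℂ) := hreal l hlmem
    show Polynomial.eval l (q.map (algebraMap ℝ ℂ)) = 1
    rw [hl']
    rw [Polynomial.eval_map, show ((l.re : ℝ) : ℂ) = algebraMap ℝ ℂ l.re from rfl,
      Polynomial.eval₂_at_apply, hqeval _ (hmemT l hlmem), hf]
    simp
  have hpne0 : p ≠ 0 := by
    intro hp0
    rw [hp0, spectrum.zero_eq] at honemem
    exact one_ne_zero (Set.mem_singleton_iff.mp honemem)
  -- p ≠ e
  have hpnee : p ≠ e := by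
    intro hpee
    have h1 : aeval b' (X * q - X) = 0 := by
      rw [map_sub, map_mul, aeval_X, ← hp, hpee, hb'e, sub_self]
    have hval := st16_vanish hb'sa _ h1
    have hTsub : ∀ t ∈ T, t = 0 ∨ t = l.re := by
      intro t ht
      rcases Finset.mem_insert.mp ht with h | h
      · exact Or.inl h
      · obtain ⟨z, hz, rfl⟩ := Finset.mem_image.mp h
        have hzs : z ∈ spectrum ℂ b' := hfin.mem_toFinset.mp hz
        have hv := hval z hzs
        rw [eval_sub, eval_mul, eval_X, hqeval _ (hmemT z hzs)] at hv
        by_cases hcase : z.re = l.re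
        · exact Or.inr hcase
        · left
          have hfz : f z.re = 0 := by rw [hf]; simp [hcase]
          rw [hfz, mul_zero, zero_sub, neg_eq_zero] at hv
          exact hv
    have hg2 : ∀ t ∈ T, (X - C l.re * q).eval t = 0 := by
      intro t ht
      rcases hTsub t ht with rfl | rfl
      · rw [eval_sub, eval_X, eval_mul, eval_C, hqeval _ ht, hf]
        simp [Ne.symm hlre]
      · rw [eval_sub, eval_X, eval_mul, eval_C, hqeval _ ht, hf]
        simp
    obtain ⟨w2, hw2⟩ := st16_dvd_of_roots T _ hg2
    have h2 : aeval b' (X - C l.re * q) = 0 := by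
      rw [hw2, map_mul]
      rw [show aeval b' (∏ t ∈ T, (X - C t)) = 0 from hrb, zero_mul]
    rw [map_sub, map_mul, aeval_X, aeval_C, ← hp] at h2
    apply hb'ne
    refine ⟨(l.re : ℂ), ?_⟩
    have hb'eq : b' = algebraMap ℝ A l.re * p := sub_eq_zero.mp h2
    rw [hb'eq, hpee, IsScalarTower.algebraMap_apply ℝ ℂ A, ← Algebra.smul_def]
    norm_num
  exact ⟨p, hpmem, hpsa, hpp, hpe, hep, hpne0, hpnee⟩

private lemma st16_family (B : StarSubalgebra ℂ A)
    (hcomm : ∀ x ∈ B, ∀ y ∈ B, x * y = y * x)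
    [Nontrivial A] (hB : FiniteDimensional ℂ B) :
    ∃ S : Finset A,
      (∀ p ∈ S, p ∈ B ∧ IsSelfAdjoint p ∧ p * p = p ∧ p ≠ 0 ∧
        (∀ b ∈ B, ∃ c : ℂ, p * b = c • p)) ∧
      (∀ p ∈ S, ∀ q ∈ S, p ≠ q → p * q = 0) ∧ (∑ x ∈ S, x) = 1 := by
  classical
  set M : A → Submodule ℂ A := fun e =>
    Submodule.map (LinearMap.mulLeft ℂ e) (Subalgebra.toSubmodule B.toSubalgebra) with hM
  haveI hBsub : FiniteDimensional ℂ (Subalgebra.toSubmodule B.toSubalgebra) := hB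
  haveI hMfin : ∀ a : A, FiniteDimensional ℂ (M a) := fun a => by
    rw [hM]; exact Module.Finite.map _ _
  have hmemM : ∀ (a x : A), x ∈ B → a * x ∈ M a := by
    intro a x hx
    exact Submodule.mem_map.mpr ⟨x, hx, rfl⟩
  have hselfM : ∀ a : A, a ∈ M a := fun a => by
    simpa using hmemM a 1 (one_mem B)
  have key : ∀ n : ℕ, ∀ e : A, e ∈ B → IsSelfAdjoint e → e * e = e →
      Module.finrank ℂ (M e) ≤ n →
      ∃ S : Finset A,
        (∀ p ∈ S, p ∈ B ∧ IsSelfAdjoint p ∧ p * p = p ∧ p * e = p ∧ e * p = p ∧ p ≠ 0 ∧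
          (∀ b ∈ B, ∃ c : ℂ, p * b = c • p)) ∧
        (∀ p ∈ S, ∀ q ∈ S, p ≠ q → p * q = 0) ∧ (∑ x ∈ S, x) = e := by
    intro n
    induction n with
    | zero =>
      intro e heB hesa heidem hrank
      have hbot : M e = ⊥ := by
        haveI := hMfin e
        exact Submodule.finrank_eq_zero.mp (Nat.le_zero.mp hrank)
      have he0 : e = 0 := by
        have := hselfM e
        rw [hbot] at this
        simpa using this
      exact ⟨∅, by simp, by simp, by simp [he0]⟩
    | succ n ih =>
      intro e heB hesa heidem hrank
      by_cases hmin : ∀ b ∈ B, ∃ c : ℂ, e * b = c • e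
      · by_cases he0 : e = 0
        · exact ⟨∅, by simp, by simp, by simp [he0]⟩
        · refine ⟨{e}, ?_, ?_, by simp⟩
          · intro x hx
            rw [Finset.mem_singleton] at hx
            subst hx
            exact ⟨heB, hesa, heidem, heidem, heidem, he0, hmin⟩
          · intro x hx z hz hne
            rw [Finset.mem_singleton] at hx hz
            subst hx; subst hz
            exact absurd rfl hne
      · push_neg at hmin
        obtain ⟨b, hbB, hb⟩ := hmin
        set y := e * b with hy
        have hyB : y ∈ B := mul_mem heB hbB
        have hstary : star y ∈ B := star_mem hyB
        have hystar_eq : star y = star b * e := by rw [hy, star_mul, hesa.star_eq]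
        have hye : y * e = y := by
          rw [hy, mul_assoc, hcomm b hbB e heB, ← mul_assoc, heidem]
        have hey : e * y = y := by rw [hy, ← mul_assoc, heidem]
        have hstarye : star y * e = star y := by rw [hystar_eq, mul_assoc, heidem]
        have hestary : e * star y = star y := by
          rw [hystar_eq, ← mul_assoc, hcomm e heB (star b) (star_mem hbB), mul_assoc, heidem]
        set h := y + star y with hh
        set k := Complex.I • (star y - y) with hk
        have hhB : h ∈ B := add_mem hyB hstary
        have hkB : k ∈ B := SMulMemClass.smul_mem _ (sub_mem hstary hyB)
        have hhsa : IsSelfAdjoint h := by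
          rw [hh, IsSelfAdjoint, star_add, star_star, add_comm]
        have hksa : IsSelfAdjoint k := by
          rw [hk, IsSelfAdjoint, star_smul, star_sub, star_star, Complex.star_def,
            Complex.conj_I, neg_smul, ← smul_neg, neg_sub]
        have hhe : h * e = h := by rw [hh, add_mul, hye, hstarye]
        have heh : e * h = h := by rw [hh, mul_add, hey, hestary]
        have hke : k * e = k := by rw [hk, smul_mul_assoc, sub_mul, hstarye, hye]
        have hek : e * k = k := by rw [hk, mul_smul_comm, mul_sub, hestary, hey]
        have hyid : y = (2⁻¹ : ℂ) • (h - (-Complex.I) • k) := by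
          rw [hh, hk, smul_smul]
          have hii : (-Complex.I) * Complex.I = 1 := by
            rw [neg_mul, Complex.I_mul_I, neg_neg]
          rw [hii, one_smul]
          have h2y : y + star y - (star y - y) = (2 : ℂ) • y := by
            rw [two_smul]; abel
          rw [h2y, smul_smul, inv_mul_cancel₀ (two_ne_zero), one_smul]
        have hcases : (¬ ∃ c : ℂ, h = c • e) ∨ (¬ ∃ c : ℂ, k = c • e) := by
          by_contra hcon
          push_neg at hcon
          obtain ⟨⟨c₁, hc₁⟩, ⟨c₂, hc₂⟩⟩ := hcon
          refine hb (2⁻¹ * (c₁ + Complex.I * c₂)) ?_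
          rw [hyid, hc₁, hc₂, smul_smul, ← sub_smul, smul_smul]
          congr 1
          ring
        obtain ⟨b', hb'B, hb'sa, hb'e, heb', hb'ne⟩ :
            ∃ b', b' ∈ B ∧ IsSelfAdjoint b' ∧ b' * e = b' ∧ e * b' = b' ∧
              ¬ ∃ c : ℂ, b' = c • e := by
          rcases hcases with hcase | hcase
          · exact ⟨h, hhB, hhsa, hhe, heh, hcase⟩
          · exact ⟨k, hkB, hksa, hke, hek, hcase⟩
        obtain ⟨p, hpB, hpsa, hpp, hpe, hep, hp0, hpne⟩ :=
          st16_split B hcomm hB heB hb'B hb'sa hb'e heb' hb'ne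
        set e₂ := e - p with he₂
        have he₂B : e₂ ∈ B := sub_mem heB hpB
        have he₂sa : IsSelfAdjoint e₂ := hesa.sub hpsa
        have hpe₂ : p * e₂ = 0 := by rw [he₂, mul_sub, hpe, hpp, sub_self]
        have he₂p : e₂ * p = 0 := by rw [he₂, sub_mul, hep, hpp, sub_self]
        have he₂idem : e₂ * e₂ = e₂ := by
          rw [he₂, sub_mul, mul_sub, mul_sub, heidem, hep, hpe, hpp]
          abel
        have he₂e : e₂ * e = e₂ := by rw [he₂, sub_mul, heidem, hpe]
        have hee₂ : e * e₂ = e₂ := by rw [he₂, mul_sub, heidem, hep]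
        have he₂0 : e₂ ≠ 0 := by
          intro h0
          apply hpne
          rw [he₂] at h0
          have := sub_eq_zero.mp h0
          exact this.symm
        -- rank bookkeeping
        have hMple : M p ≤ M e := by
          rintro x hx
          obtain ⟨b₀, hb₀, rfl⟩ := Submodule.mem_map.mp hx
          refine Submodule.mem_map.mpr ⟨p * b₀, show p * b₀ ∈ B from mul_mem hpB hb₀, ?_⟩
          show e * (p * b₀) = p * b₀
          rw [← mul_assoc, hep]
        have hMe₂le : M e₂ ≤ M e := by
          rintro x hx
          obtain ⟨b₀, hb₀, rfl⟩ := Submodule.mem_map.mp hx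
          refine Submodule.mem_map.mpr ⟨e₂ * b₀, show e₂ * b₀ ∈ B from mul_mem he₂B hb₀, ?_⟩
          show e * (e₂ * b₀) = e₂ * b₀
          rw [← mul_assoc, hee₂]
        have hsup : M p ⊔ M e₂ = M e := by
          refine le_antisymm (sup_le hMple hMe₂le) ?_
          rintro x hx
          obtain ⟨b₀, hb₀, rfl⟩ := Submodule.mem_map.mp hx
          refine Submodule.mem_sup.mpr ⟨p * b₀, hmemM p b₀ hb₀, e₂ * b₀, hmemM e₂ b₀ hb₀, ?_⟩
          show p * b₀ + e₂ * b₀ = e * b₀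
          rw [← add_mul, he₂, add_sub_cancel]
        have hinf : M p ⊓ M e₂ = ⊥ := by
          rw [eq_bot_iff]
          rintro x ⟨hx₁, hx₂⟩
          obtain ⟨b₁, hb₁, hxb₁⟩ := Submodule.mem_map.mp hx₁
          obtain ⟨b₂, hb₂, hxb₂⟩ := Submodule.mem_map.mp hx₂
          have hx1 : x = p * b₁ := hxb₁.symm
          have hx2 : x = e₂ * b₂ := hxb₂.symm
          have hpx : p * x = x := by rw [hx1, ← mul_assoc, hpp]
          have hpx0 : p * x = 0 := by rw [hx2, ← mul_assoc, hpe₂, zero_mul]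
          simp only [Submodule.mem_bot]
          rw [← hpx, hpx0]
        have heqrank : Module.finrank ℂ (M p) + Module.finrank ℂ (M e₂)
            = Module.finrank ℂ (M e) := by
          haveI := hMfin p
          haveI := hMfin e₂
          have hfe := Submodule.finrank_sup_add_finrank_inf_eq (M p) (M e₂)
          rw [hsup, hinf] at hfe
          simpa using hfe.symm
        have hppos : Module.finrank ℂ (M p) ≠ 0 := by
          haveI := hMfin p
          intro h0
          have hbot : M p = ⊥ := Submodule.finrank_eq_zero.mp h0
          have := hselfM p
          rw [hbot] at this
          exact hp0 (by simpa using this)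
        have he₂pos : Module.finrank ℂ (M e₂) ≠ 0 := by
          haveI := hMfin e₂
          intro h0
          have hbot : M e₂ = ⊥ := Submodule.finrank_eq_zero.mp h0
          have := hselfM e₂
          rw [hbot] at this
          exact he₂0 (by simpa using this)
        obtain ⟨S₁, hS₁, hS₁orth, hS₁sum⟩ := ih p hpB hpsa hpp (by omega)
        obtain ⟨S₂, hS₂, hS₂orth, hS₂sum⟩ := ih e₂ he₂B he₂sa he₂idem (by omega)
        have hdisj : Disjoint S₁ S₂ := by
          rw [Finset.disjoint_left]
          intro a ha₁ ha₂
          obtain ⟨_, _, _, hap, hpa, ha0, _⟩ := hS₁ a ha₁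
          obtain ⟨_, _, _, hae₂, he₂a, _, _⟩ := hS₂ a ha₂
          refine absurd ?_ ha0
          calc a = a * e₂ := hae₂.symm
            _ = (a * p) * e₂ := by rw [hap]
            _ = a * (p * e₂) := mul_assoc _ _ _
            _ = 0 := by rw [hpe₂, mul_zero]
        refine ⟨S₁ ∪ S₂, ?_, ?_, ?_⟩
        · intro x hx
          rcases Finset.mem_union.mp hx with hx | hx
          · obtain ⟨h1, h2, h3, h4, h5, h6, h7⟩ := hS₁ x hx
            refine ⟨h1, h2, h3, ?_, ?_, h6, h7⟩
            · calc x * e = (x * p) * e := by rw [h4]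
                _ = x * (p * e) := mul_assoc _ _ _
                _ = x * p := by rw [hpe]
                _ = x := h4
            · calc e * x = e * (p * x) := by rw [h5]
                _ = (e * p) * x := (mul_assoc _ _ _).symm
                _ = p * x := by rw [hep]
                _ = x := h5
          · obtain ⟨h1, h2, h3, h4, h5, h6, h7⟩ := hS₂ x hx
            refine ⟨h1, h2, h3, ?_, ?_, h6, h7⟩
            · calc x * e = (x * e₂) * e := by rw [h4]
                _ = x * (e₂ * e) := mul_assoc _ _ _
                _ = x * e₂ := by rw [he₂e]
                _ = x := h4
            · calc e * x = e * (e₂ * x) := by rw [h5]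
                _ = (e * e₂) * x := (mul_assoc _ _ _).symm
                _ = e₂ * x := by rw [hee₂]
                _ = x := h5
        · intro x hx z hz hne
          rcases Finset.mem_union.mp hx with hx | hx <;>
            rcases Finset.mem_union.mp hz with hz | hz
          · exact hS₁orth x hx z hz hne
          · obtain ⟨_, _, _, hxp, _, _, _⟩ := hS₁ x hx
            obtain ⟨_, _, _, _, he₂z, _, _⟩ := hS₂ z hz
            calc x * z = (x * p) * (e₂ * z) := by rw [hxp, he₂z]
              _ = x * ((p * e₂) * z) := by rw [mul_assoc, mul_assoc]
              _ = 0 := by rw [hpe₂, zero_mul, mul_zero]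
          · obtain ⟨_, _, _, hxe₂, _, _, _⟩ := hS₂ x hx
            obtain ⟨_, _, _, _, hpz, _, _⟩ := hS₁ z hz
            calc x * z = (x * e₂) * (p * z) := by rw [hxe₂, hpz]
              _ = x * ((e₂ * p) * z) := by rw [mul_assoc, mul_assoc]
              _ = 0 := by rw [he₂p, zero_mul, mul_zero]
          · exact hS₂orth x hx z hz hne
        · rw [Finset.sum_union hdisj, hS₁sum, hS₂sum, he₂, add_sub_cancel]
  have h1sa : IsSelfAdjoint (1 : A) := by rw [IsSelfAdjoint, star_one]
  obtain ⟨S, hS, hSorth, hSsum⟩ :=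
    key (Module.finrank ℂ (M 1)) 1 (one_mem B) h1sa (mul_one 1) le_rfl
  exact ⟨S, fun p hp => by
    obtain ⟨h1, h2, h3, _, _, h6, h7⟩ := hS p hp
    exact ⟨h1, h2, h3, h6, h7⟩, hSorth, hSsum⟩

/-- In an infinite-dimensional unital C*-algebra, every maximal abelian star-subalgebra is
infinite-dimensional. -/
theorem stmt16 (A : Type u) [NormedRing A] [StarRing A] [CStarRing A]
    [NormedAlgebra ℂ A] [CompleteSpace A] [StarModule ℂ A]
    (hA : ¬ FiniteDimensional ℂ A)
    (B : StarSubalgebra ℂ A)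
    (hcomm : ∀ x ∈ B, ∀ y ∈ B, x * y = y * x)
    (hmax : ∀ C : StarSubalgebra ℂ A, (∀ x ∈ C, ∀ y ∈ C, x * y = y * x) → B ≤ C → B = C) :
    ¬ FiniteDimensional ℂ B := by
  intro hBfin
  refine hA ?_
  by_cases hnt : Nontrivial A
  case neg =>
    rw [not_nontrivial_iff_subsingleton] at hnt
    exact ⟨by rw [Subsingleton.elim (⊤ : Submodule ℂ A) ⊥]; exact Submodule.fg_bot⟩
  case pos =>
  classical
  obtain ⟨S, hS, hSorth, hSsum⟩ := st16_family B hcomm hBfin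
  -- diagonal corners are one-dimensional
  have hdiag : ∀ p ∈ S, ∀ a : A, ∃ c : ℂ, p * a * p = c • p := by
    intro p hp a
    obtain ⟨hpB, hpsa, hpp, hp0, hmin⟩ := hS p hp
    have key2 : ∀ w : A, ∀ b ∈ B, b * (p * w * p) = (p * w * p) * b := by
      intro w b hbB
      obtain ⟨c, hc⟩ := hmin b hbB
      have hbp : b * p = c • p := by rw [← hc, hcomm b hbB p hpB]
      have h1 : b * (p * w * p) = c • (p * w * p) := by
        rw [← mul_assoc, ← mul_assoc, hbp, smul_mul_assoc, smul_mul_assoc]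
      have h2 : (p * w * p) * b = c • (p * w * p) := by
        rw [mul_assoc, hc, mul_smul_comm]
      rw [h1, h2]
    have hstareq : star (p * a * p) = p * star a * p := by
      rw [star_mul, star_mul, hpsa.star_eq, ← mul_assoc]
    have hxmem : (p * a * p) ∈ B := by
      refine st16_mem_of_commutes B hcomm hmax (key2 a) ?_
      intro b hbB
      rw [hstareq]
      exact key2 (star a) b hbB
    obtain ⟨c, hc⟩ := hmin _ hxmem
    have hpx : p * (p * a * p) = p * a * p := by
      rw [← mul_assoc, ← mul_assoc, hpp]
    exact ⟨c, by rw [← hpx, hc]⟩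
  -- off-diagonal corners are at most one-dimensional
  have hoff : ∀ p ∈ S, ∀ q ∈ S, ∃ x₀ : A, ∀ a : A, ∃ c : ℂ, p * a * q = c • x₀ := by
    intro p hp q hq
    by_cases hzero : ∀ a : A, p * a * q = 0
    · exact ⟨0, fun a => ⟨0, by rw [hzero a, zero_smul]⟩⟩
    · push_neg at hzero
      obtain ⟨a₀, ha₀⟩ := hzero
      obtain ⟨hpB, hpsa, hpp, hp0, _⟩ := hS p hp
      obtain ⟨hqB, hqsa, hqq, hq0, _⟩ := hS q hq
      set x₀ := p * a₀ * q with hx₀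
      have hstar₀ : star x₀ = q * star a₀ * p := by
        rw [hx₀, star_mul, star_mul, hpsa.star_eq, hqsa.star_eq, ← mul_assoc]
      obtain ⟨c', hc'⟩ := hdiag q hq (star a₀ * (p * a₀))
      have hkey : star x₀ * x₀ = c' • q := by
        rw [hstar₀, hx₀]
        have hassoc : (q * star a₀ * p) * (p * a₀ * q) = q * (star a₀ * (p * a₀)) * q := by
          simp only [mul_assoc]
          rw [← mul_assoc p p, hpp]
        rw [hassoc, hc']
      have hc'0 : c' ≠ 0 := by
        intro h0
        rw [h0, zero_smul] at hkey
        exact ha₀ (CStarRing.star_mul_self_eq_zero_iff x₀ |>.mp hkey)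
      refine ⟨x₀, fun a => ?_⟩
      obtain ⟨d, hd⟩ := hdiag p hp (a * (q * star a₀))
      have hyx : (p * a * q) * star x₀ = d • p := by
        rw [hstar₀]
        have hassoc : (p * a * q) * (q * star a₀ * p) = p * (a * (q * star a₀)) * p := by
          simp only [mul_assoc]
          rw [← mul_assoc q q, hqq]
        rw [hassoc, hd]
      have h1 : (p * a * q) * (star x₀ * x₀) = c' • (p * a * q) := by
        rw [hkey, mul_smul_comm, mul_assoc, hqq]
      have h2 : (p * a * q) * (star x₀ * x₀) = d • x₀ := by
        rw [← mul_assoc, hyx, smul_mul_assoc]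
        congr 1
        rw [hx₀]
        simp only [mul_assoc]
        rw [← mul_assoc p p, hpp]
      have hcx : c' • (p * a * q) = d • x₀ := h1.symm.trans h2
      refine ⟨c'⁻¹ * d, ?_⟩
      calc p * a * q = c'⁻¹ • (c' • (p * a * q)) := by
            rw [smul_smul, inv_mul_cancel₀ hc'0, one_smul]
        _ = c'⁻¹ • (d • x₀) := by rw [hcx]
        _ = (c'⁻¹ * d) • x₀ := by rw [smul_smul]
  -- choose generators
  have hoff' : ∀ pq : {z // z ∈ S} × {z // z ∈ S}, ∃ x₀ : A,
      ∀ a : A, ∃ c : ℂ, (pq.1 : A) * a * (pq.2 : A) = c • x₀ :=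
    fun pq => hoff _ pq.1.2 _ pq.2.2
  choose g hg using hoff'
  have hspan : ∀ a : A, a ∈ Submodule.span ℂ (Set.range g) := by
    intro a
    have hsum : a = ∑ p ∈ S, ∑ q ∈ S, p * a * q := by
      conv_lhs => rw [← one_mul a, ← mul_one ((1 : A) * a), ← hSsum]
      rw [Finset.sum_mul, Finset.sum_mul_sum]
    rw [hsum]
    refine Submodule.sum_mem _ fun p hp => Submodule.sum_mem _ fun q hq => ?_
    obtain ⟨c, hc⟩ := hg (⟨p, hp⟩, ⟨q, hq⟩) a
    rw [show p * a * q = c • g (⟨p, hp⟩, ⟨q, hq⟩) from hc]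
    exact Submodule.smul_mem _ _ (Submodule.subset_span (Set.mem_range_self _))
  have htop : (⊤ : Submodule ℂ A) = Submodule.span ℂ (Set.range g) :=
    le_antisymm (fun a _ => hspan a) le_top
  exact ⟨htop ▸ Submodule.fg_span (Set.finite_range g)⟩
end
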